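/- arXiv:2207.00333 — 3 statements merged into one kernel-verified Lean document; each statement's English description precedes it below -/
import Mathlib

section
/- Let γ = (u_i K_{ij} v_j) and γ* = (u*_i K_{ij} v*_j) be two scaled matrices with K ∈ ℝ^{d×d}_{>0}, v, v* ∈ ℝ^d_{>0}, and suppose both have the same strictly positive row sums. Define f_γ(i) := (∑_j γ_{ij}·j)/(∑_j γ_{ij}) - i, and let A := d_H(v, v*). Then for every i, e^{-A}·(f_{γ*}(i)+i) ≤ f_γ(i)+i ≤ e^A·(f_{γ*}(i)+i), and consequently |f_γ(i) - f_{γ*}(i)| ≤ d·(e^A - 1). -/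
/-- Stability of the associated disparity-type function under perturbation of the
scaling vector `v`, quantified by the Hilbert metric `A = d_H(v, v*)`. -/
theorem stmt_10 (d : ℕ) (hd : 0 < d) (K : Fin d → Fin d → ℝ) (hK : ∀ i j, 0 < K i j)
    (u ustar v vstar : Fin d → ℝ)
    (hv : ∀ j, 0 < v j) (hvstar : ∀ j, 0 < vstar j)
    (γ γstar : Fin d → Fin d → ℝ)
    (hγ : γ = fun i j => u i * K i j * v j)
    (hγstar : γstar = fun i j => ustar i * K i j * vstar j)
    (hrowpos : ∀ i, 0 < ∑ j, γ i j)
    (hrow : ∀ i, ∑ j, γ i j = ∑ j, γstar i j)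
    (f fstar : Fin d → ℝ)
    (hf : f = fun i => (∑ j, γ i j * ((j : ℝ) + 1)) / (∑ j, γ i j) - ((i : ℝ) + 1))
    (hfstar : fstar = fun i =>
      (∑ j, γstar i j * ((j : ℝ) + 1)) / (∑ j, γstar i j) - ((i : ℝ) + 1))
    (A : ℝ)
    (hA : A = (⨆ j, (Real.log (v j) - Real.log (vstar j)))
            - ⨅ j, (Real.log (v j) - Real.log (vstar j))) :
    (∀ i, Real.exp (-A) * (fstar i + ((i : ℝ) + 1)) ≤ f i + ((i : ℝ) + 1) ∧
          f i + ((i : ℝ) + 1) ≤ Real.exp A * (fstar i + ((i : ℝ) + 1))) ∧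
    (∀ i, |f i - fstar i| ≤ d * (Real.exp A - 1)) := by
  have hne : Nonempty (Fin d) := ⟨⟨0, hd⟩⟩
  set L : Fin d → ℝ := fun j => Real.log (v j) - Real.log (vstar j) with hLdef
  have hbA : BddAbove (Set.range L) := (Set.finite_range L).bddAbove
  have hbB : BddBelow (Set.range L) := (Set.finite_range L).bddBelow
  set M : ℝ := ⨆ j, L j with hMdef
  set m : ℝ := ⨅ j, L j with hmdef
  have hMle : ∀ j, L j ≤ M := fun j => le_ciSup hbA j
  have hmle : ∀ j, m ≤ L j := fun j => ciInf_le hbB j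
  have hAeq : A = M - m := hA
  have hA0 : 0 ≤ A := by
    rw [hAeq]
    have := (hmle ⟨0, hd⟩).trans (hMle ⟨0, hd⟩)
    linarith
  -- pointwise bounds
  have hvM : ∀ j, v j ≤ Real.exp M * vstar j := by
    intro j
    have hvj : v j = Real.exp (L j) * vstar j := by
      rw [hLdef]
      rw [Real.exp_sub, Real.exp_log (hv j), Real.exp_log (hvstar j),
        div_mul_cancel₀ _ (hvstar j).ne']
    rw [hvj]
    exact mul_le_mul_of_nonneg_right (Real.exp_le_exp.mpr (hMle j)) (hvstar j).le
  have hvm : ∀ j, Real.exp m * vstar j ≤ v j := by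
    intro j
    have hvj : v j = Real.exp (L j) * vstar j := by
      rw [hLdef]
      rw [Real.exp_sub, Real.exp_log (hv j), Real.exp_log (hvstar j),
        div_mul_cancel₀ _ (hvstar j).ne']
    rw [hvj]
    exact mul_le_mul_of_nonneg_right (Real.exp_le_exp.mpr (hmle j)) (hvstar j).le
  -- sums
  set Sv : Fin d → ℝ := fun i => ∑ j, K i j * v j with hSv
  set Tv : Fin d → ℝ := fun i => ∑ j, K i j * v j * ((j : ℝ) + 1) with hTv
  set Ss : Fin d → ℝ := fun i => ∑ j, K i j * vstar j with hSs
  set Ts : Fin d → ℝ := fun i => ∑ j, K i j * vstar j * ((j : ℝ) + 1) with hTs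
  have hSvpos : ∀ i, 0 < Sv i := fun i =>
    Finset.sum_pos (fun j _ => mul_pos (hK i j) (hv j)) Finset.univ_nonempty
  have hSspos : ∀ i, 0 < Ss i := fun i =>
    Finset.sum_pos (fun j _ => mul_pos (hK i j) (hvstar j)) Finset.univ_nonempty
  have hTvpos : ∀ i, 0 < Tv i := fun i =>
    Finset.sum_pos (fun j _ => mul_pos (mul_pos (hK i j) (hv j)) (by positivity))
      Finset.univ_nonempty
  have hTspos : ∀ i, 0 < Ts i := fun i =>
    Finset.sum_pos (fun j _ => mul_pos (mul_pos (hK i j) (hvstar j)) (by positivity))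
      Finset.univ_nonempty
  have hupos : ∀ i, 0 < u i := by
    intro i
    have h := hrowpos i
    rw [hγ] at h
    have hs : ∑ j, u i * K i j * v j = u i * Sv i := by
      rw [hSv, Finset.mul_sum]; exact Finset.sum_congr rfl fun j _ => by ring
    rw [hs] at h
    rcases mul_pos_iff.mp h with ⟨h1, _⟩ | ⟨_, h2⟩
    · exact h1
    · exact absurd (hSvpos i) (not_lt.mpr h2.le)
  have huspos : ∀ i, 0 < ustar i := by
    intro i
    have h := hrowpos i
    rw [hrow i, hγstar] at h
    have hs : ∑ j, ustar i * K i j * vstar j = ustar i * Ss i := by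
      rw [hSs, Finset.mul_sum]; exact Finset.sum_congr rfl fun j _ => by ring
    rw [hs] at h
    rcases mul_pos_iff.mp h with ⟨h1, _⟩ | ⟨_, h2⟩
    · exact h1
    · exact absurd (hSspos i) (not_lt.mpr h2.le)
  have hfeq : ∀ i, f i + ((i : ℝ) + 1) = Tv i / Sv i := by
    intro i
    rw [hf, hγ]
    simp only
    have h1 : ∑ j, u i * K i j * v j * ((j : ℝ) + 1) = u i * Tv i := by
      rw [hTv, Finset.mul_sum]; exact Finset.sum_congr rfl fun j _ => by ring
    have h2 : ∑ j, u i * K i j * v j = u i * Sv i := by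
      rw [hSv, Finset.mul_sum]; exact Finset.sum_congr rfl fun j _ => by ring
    rw [h1, h2, mul_div_mul_left _ _ (hupos i).ne']
    ring
  have hfseq : ∀ i, fstar i + ((i : ℝ) + 1) = Ts i / Ss i := by
    intro i
    rw [hfstar, hγstar]
    simp only
    have h1 : ∑ j, ustar i * K i j * vstar j * ((j : ℝ) + 1) = ustar i * Ts i := by
      rw [hTs, Finset.mul_sum]; exact Finset.sum_congr rfl fun j _ => by ring
    have h2 : ∑ j, ustar i * K i j * vstar j = ustar i * Ss i := by
      rw [hSs, Finset.mul_sum]; exact Finset.sum_congr rfl fun j _ => by ring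
    rw [h1, h2, mul_div_mul_left _ _ (huspos i).ne']
    ring
  -- comparison of sums
  have hTvle : ∀ i, Tv i ≤ Real.exp M * Ts i := by
    intro i
    rw [hTv, hTs, Finset.mul_sum]
    refine Finset.sum_le_sum fun j _ => ?_
    have hj : (0:ℝ) ≤ (j : ℝ) + 1 := by positivity
    have h1 := mul_le_mul_of_nonneg_right
      (mul_le_mul_of_nonneg_left (hvM j) (hK i j).le) hj
    nlinarith [h1]
  have hTvge : ∀ i, Real.exp m * Ts i ≤ Tv i := by
    intro i
    rw [hTv, hTs, Finset.mul_sum]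
    refine Finset.sum_le_sum fun j _ => ?_
    have hj : (0:ℝ) ≤ (j : ℝ) + 1 := by positivity
    have h1 := mul_le_mul_of_nonneg_right
      (mul_le_mul_of_nonneg_left (hvm j) (hK i j).le) hj
    nlinarith [h1]
  have hSvle : ∀ i, Sv i ≤ Real.exp M * Ss i := by
    intro i
    rw [hSv, hSs, Finset.mul_sum]
    refine Finset.sum_le_sum fun j _ => ?_
    nlinarith [mul_le_mul_of_nonneg_left (hvM j) (hK i j).le]
  have hSvge : ∀ i, Real.exp m * Ss i ≤ Sv i := by
    intro i
    rw [hSv, hSs, Finset.mul_sum]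
    refine Finset.sum_le_sum fun j _ => ?_
    nlinarith [mul_le_mul_of_nonneg_left (hvm j) (hK i j).le]
  -- main two-sided bound
  have hmain : ∀ i, Real.exp (-A) * (Ts i / Ss i) ≤ Tv i / Sv i ∧
      Tv i / Sv i ≤ Real.exp A * (Ts i / Ss i) := by
    intro i
    constructor
    · have h1 : (Real.exp m * Ts i) / (Real.exp M * Ss i) ≤ Tv i / Sv i :=
        div_le_div₀ (hTvpos i).le (hTvge i) (hSvpos i) (hSvle i)
      calc Real.exp (-A) * (Ts i / Ss i)
          = (Real.exp m * Ts i) / (Real.exp M * Ss i) := by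
            rw [hAeq, neg_sub, Real.exp_sub, div_mul_div_comm]
        _ ≤ Tv i / Sv i := h1
    · have h1 : Tv i / Sv i ≤ (Real.exp M * Ts i) / (Real.exp m * Ss i) :=
        div_le_div₀ (mul_pos (Real.exp_pos M) (hTspos i)).le (hTvle i)
          (mul_pos (Real.exp_pos m) (hSspos i)) (hSvge i)
      calc Tv i / Sv i ≤ (Real.exp M * Ts i) / (Real.exp m * Ss i) := h1
        _ = Real.exp A * (Ts i / Ss i) := by
            rw [hAeq, Real.exp_sub, div_mul_div_comm]
  -- bounds on gstar
  have hgs1 : ∀ i, 1 ≤ Ts i / Ss i := by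
    intro i
    rw [le_div_iff₀ (hSspos i), one_mul, hTs, hSs]
    simp only
    refine Finset.sum_le_sum fun j _ => ?_
    have hj : (1:ℝ) ≤ (j : ℝ) + 1 := by
      have : (0:ℝ) ≤ (j : ℝ) := by positivity
      linarith
    nlinarith [mul_pos (hK i j) (hvstar j)]
  have hgsd : ∀ i, Ts i / Ss i ≤ d := by
    intro i
    rw [div_le_iff₀ (hSspos i), hTs, hSs]
    simp only
    rw [Finset.mul_sum]
    refine Finset.sum_le_sum fun j _ => ?_
    have hj : (j : ℝ) + 1 ≤ (d : ℝ) := by exact_mod_cast Nat.succ_le_of_lt j.isLt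
    nlinarith [mul_pos (hK i j) (hvstar j)]
  refine ⟨fun i => ?_, fun i => ?_⟩
  · rw [hfeq i, hfseq i]
    exact hmain i
  · have h := hmain i
    have e1 := hfeq i
    have e2 := hfseq i
    have hgs1' := hgs1 i
    have hgsd' := hgsd i
    have heA : 1 ≤ Real.exp A := Real.one_le_exp hA0
    have heA' : Real.exp (-A) ≤ 1 := Real.exp_le_one_iff.mpr (by linarith)
    have hexps : 1 - Real.exp (-A) ≤ Real.exp A - 1 := by
      nlinarith [Real.add_one_le_exp A, Real.add_one_le_exp (-A)]
    have hdiff : f i - fstar i = Tv i / Sv i - Ts i / Ss i := by linarith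
    rw [hdiff, abs_le]
    have p2 : (Real.exp A - 1) * (Ts i / Ss i) ≤ (Real.exp A - 1) * d :=
      mul_le_mul_of_nonneg_left hgsd' (by linarith)
    constructor
    · have p1 : (1 - Real.exp (-A)) * (Ts i / Ss i) ≤
          (Real.exp A - 1) * (Ts i / Ss i) :=
        mul_le_mul_of_nonneg_right hexps (by linarith)
      nlinarith [h.1]
    · nlinarith [h.2]
end

section
/- Let ν₀ have total mass m₀ > 1, ν₁ a probability vector, both strictly positive on {1,…,d}, and let ν̃₀ := ν₀/m₀. Initialize γ^{(0)} := α for a strictly positive matrix α and alternate KL projections γ^{(2k+1)} := Proj^{KL}_{C¹_{ν₀}}(γ^{(2k)}), γ^{(2k+2)} := Proj^{KL}_{C²_{ν₁}}(γ^{(2k+1)}). Then the even subsequence (γ^{(2k)}) converges to Proj^{KL}_{Π(ν̃₀,ν₁)}(α) and the odd subsequence (γ^{(2k+1)}) converges to m₀ · Proj^{KL}_{Π(ν̃₀,ν₁)}(α); in particular the two subsequences converge to distinct limits whose ratio is the constant m₀. -/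
open Filter Finset Real

namespace Stmt16

variable {d : ℕ} (A : Fin d → Fin d → ℝ) (ν₀ ν₁ : Fin d → ℝ)

noncomputable def V : ℕ → Fin d → ℝ
  | 0 => fun _ => 1
  | k+1 => fun j => ν₁ j / ∑ i, A i j * (ν₀ i / ∑ j', A i j' * V k j')

noncomputable def U (k : ℕ) (i : Fin d) : ℝ := ν₀ i / ∑ j, A i j * V A ν₀ ν₁ k j

lemma V_succ (k : ℕ) (j : Fin d) :
    V A ν₀ ν₁ (k+1) j = ν₁ j / ∑ i, A i j * U A ν₀ ν₁ k i := rfl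

variable (hd : 0 < d) (hA : ∀ i j, 0 < A i j) (hν₀ : ∀ i, 0 < ν₀ i) (hν₁ : ∀ j, 0 < ν₁ j)

include hd in
lemma univ_ne : (Finset.univ : Finset (Fin d)).Nonempty := ⟨⟨0, hd⟩, Finset.mem_univ _⟩

include hd hA hν₀ hν₁ in
lemma V_pos : ∀ k j, 0 < V A ν₀ ν₁ k j := by
  intro k
  induction k with
  | zero => intro j; simp [V]
  | succ k ih =>
    intro j
    rw [V]
    apply div_pos (hν₁ j)
    apply Finset.sum_pos _ (univ_ne hd)
    intro i _
    apply mul_pos (hA i j)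
    apply div_pos (hν₀ i)
    exact Finset.sum_pos (fun j' _ => mul_pos (hA i j') (ih j')) (univ_ne hd)

include hd hA hν₀ hν₁ in
lemma rowsum_pos : ∀ k i, 0 < ∑ j, A i j * V A ν₀ ν₁ k j := fun k i =>
  Finset.sum_pos (fun j _ => mul_pos (hA i j) (V_pos A ν₀ ν₁ hd hA hν₀ hν₁ k j)) (univ_ne hd)

include hd hA hν₀ hν₁ in
lemma U_pos : ∀ k i, 0 < U A ν₀ ν₁ k i := fun k i =>
  div_pos (hν₀ i) (rowsum_pos A ν₀ ν₁ hd hA hν₀ hν₁ k i)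

include hd hA hν₀ hν₁ in
lemma colsumU_pos : ∀ k j, 0 < ∑ i, A i j * U A ν₀ ν₁ k i := fun k j =>
  Finset.sum_pos (fun i _ => mul_pos (hA i j) (U_pos A ν₀ ν₁ hd hA hν₀ hν₁ k i)) (univ_ne hd)

include hd hA hν₀ hν₁ in
lemma exists_delta : ∃ δ : ℝ, 0 < δ ∧ δ ≤ 1/4 ∧
    ∀ k i j, δ * (∑ j', A i j' * V A ν₀ ν₁ k j') ≤ A i j * V A ν₀ ν₁ k j := by
  have neP : (Finset.univ : Finset (Fin d × Fin d)).Nonempty :=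
    ⟨(⟨0, hd⟩, ⟨0, hd⟩), Finset.mem_univ _⟩
  set a := Finset.univ.inf' neP (fun p : Fin d × Fin d => A p.1 p.2) with hadef
  set b := Finset.univ.sup' neP (fun p : Fin d × Fin d => A p.1 p.2) with hbdef
  have ha : ∀ i j, a ≤ A i j := fun i j => by rw [hadef]; exact Finset.inf'_le _ (Finset.mem_univ (i, j))
  have hb : ∀ i j, A i j ≤ b := fun i j => by rw [hbdef]; exact Finset.le_sup' (fun p : Fin d × Fin d => A p.1 p.2) (Finset.mem_univ (i, j))
  have hapos : 0 < a := by
    obtain ⟨p, _, hp⟩ := Finset.exists_mem_eq_inf' neP (fun p : Fin d × Fin d => A p.1 p.2)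
    rw [hadef, hp]; exact hA _ _
  have hbpos : 0 < b := lt_of_lt_of_le hapos (le_trans (ha ⟨0,hd⟩ ⟨0,hd⟩) (hb _ _))
  set na := Finset.univ.inf' (univ_ne hd) ν₁ with hnadef
  set nb := Finset.univ.sup' (univ_ne hd) ν₁ with hnbdef
  have hna : ∀ j, na ≤ ν₁ j := fun j => by rw [hnadef]; exact Finset.inf'_le _ (Finset.mem_univ j)
  have hnb : ∀ j, ν₁ j ≤ nb := fun j => by rw [hnbdef]; exact Finset.le_sup' ν₁ (Finset.mem_univ j)
  have hnapos : 0 < na := by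
    obtain ⟨p, _, hp⟩ := Finset.exists_mem_eq_inf' (univ_ne hd) ν₁
    rw [hnadef, hp]; exact hν₁ _
  have hnbpos : 0 < nb := lt_of_lt_of_le hnapos (le_trans (hna ⟨0,hd⟩) (hnb _))
  set C := (nb * b) / (na * a) with hCdef
  have hCpos : 0 < C := div_pos (mul_pos hnbpos hbpos) (mul_pos hnapos hapos)
  have hC1 : 1 ≤ C := by
    rw [hCdef, le_div_iff₀ (mul_pos hnapos hapos), one_mul]
    exact mul_le_mul (le_trans (hna ⟨0,hd⟩) (hnb ⟨0,hd⟩)) (le_trans (ha ⟨0,hd⟩ ⟨0,hd⟩) (hb ⟨0,hd⟩ ⟨0,hd⟩)) (le_of_lt hapos) (le_of_lt hnbpos)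
  have spread : ∀ k j j', V A ν₀ ν₁ k j ≤ C * V A ν₀ ν₁ k j' := by
    intro k
    induction k with
    | zero => intro j j'; simpa [V] using hC1
    | succ k _ =>
      intro j j'
      have hS : ∀ j, 0 < ∑ i, A i j * U A ν₀ ν₁ k i := colsumU_pos A ν₀ ν₁ hd hA hν₀ hν₁ k
      rw [V_succ, V_succ, mul_div_assoc', div_le_div_iff₀ (hS j) (hS j')]
      have h2 : a * (∑ i, A i j' * U A ν₀ ν₁ k i) ≤ b * (∑ i, A i j * U A ν₀ ν₁ k i) := by
        rw [Finset.mul_sum, Finset.mul_sum]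
        refine Finset.sum_le_sum fun i _ => ?_
        have hU := le_of_lt (U_pos A ν₀ ν₁ hd hA hν₀ hν₁ k i)
        have key : a * A i j' ≤ b * A i j := by
          nlinarith [ha i j, hb i j', hA i j', hapos, hbpos]
        calc a * (A i j' * U A ν₀ ν₁ k i) = (a * A i j') * U A ν₀ ν₁ k i := by ring
          _ ≤ (b * A i j) * U A ν₀ ν₁ k i := mul_le_mul_of_nonneg_right key hU
          _ = b * (A i j * U A ν₀ ν₁ k i) := by ring
      have h1 : ν₁ j * na ≤ nb * ν₁ j' :=
        mul_le_mul (hnb j) (hna j') (le_of_lt hnapos) (le_of_lt hnbpos)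
      have prodIneq : (ν₁ j * na) * (a * (∑ i, A i j' * U A ν₀ ν₁ k i))
          ≤ (nb * ν₁ j') * (b * (∑ i, A i j * U A ν₀ ν₁ k i)) :=
        mul_le_mul h1 h2 (mul_nonneg (le_of_lt hapos) (Finset.sum_nonneg fun i _ =>
          le_of_lt (mul_pos (hA i j') (U_pos A ν₀ ν₁ hd hA hν₀ hν₁ k i))))
          (mul_nonneg (le_of_lt hnbpos) (le_of_lt (hν₁ j')))
      rw [hCdef, div_mul_eq_mul_div, div_mul_eq_mul_div, le_div_iff₀ (mul_pos hnapos hapos)]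
      nlinarith [prodIneq]
  have hdenom : (0:ℝ) < (d:ℝ) * b * C := by
    have : (0:ℝ) < (d:ℝ) := by exact_mod_cast hd
    positivity
  refine ⟨min (a / ((d:ℝ) * b * C)) (1/4), lt_min (div_pos hapos hdenom) (by norm_num),
    min_le_right _ _, ?_⟩
  intro k i j
  have hVpos := V_pos A ν₀ ν₁ hd hA hν₀ hν₁
  have hsumle : ∑ j', A i j' * V A ν₀ ν₁ k j' ≤ (d:ℝ) * (b * (C * V A ν₀ ν₁ k j)) := by
    calc ∑ j', A i j' * V A ν₀ ν₁ k j' ≤ ∑ _j' : Fin d, b * (C * V A ν₀ ν₁ k j) :=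
          Finset.sum_le_sum fun j' _ => mul_le_mul (hb i j') (spread k j' j)
            (le_of_lt (hVpos k j')) (le_of_lt hbpos)
      _ = (d:ℝ) * (b * (C * V A ν₀ ν₁ k j)) := by
          rw [Finset.sum_const, Finset.card_univ, Fintype.card_fin, nsmul_eq_mul]
  have hsumnn : (0:ℝ) ≤ ∑ j', A i j' * V A ν₀ ν₁ k j' :=
    Finset.sum_nonneg fun j' _ => le_of_lt (mul_pos (hA i j') (hVpos k j'))
  have hδ0nn : (0:ℝ) ≤ a / ((d:ℝ) * b * C) := le_of_lt (div_pos hapos hdenom)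
  calc min (a / ((d:ℝ) * b * C)) (1/4) * (∑ j', A i j' * V A ν₀ ν₁ k j')
      ≤ (a / ((d:ℝ) * b * C)) * (∑ j', A i j' * V A ν₀ ν₁ k j') :=
        mul_le_mul_of_nonneg_right (min_le_left _ _) hsumnn
    _ ≤ (a / ((d:ℝ) * b * C)) * ((d:ℝ) * (b * (C * V A ν₀ ν₁ k j))) :=
        mul_le_mul_of_nonneg_left hsumle hδ0nn
    _ = a * V A ν₀ ν₁ k j := by field_simp
    _ ≤ A i j * V A ν₀ ν₁ k j := mul_le_mul_of_nonneg_right (ha i j) (le_of_lt (hVpos k j))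
noncomputable def sI (k : ℕ) (i : Fin d) : ℝ :=
  (∑ j, A i j * V A ν₀ ν₁ (k+1) j) / (∑ j, A i j * V A ν₀ ν₁ k j)

noncomputable def rr (k : ℕ) (j : Fin d) : ℝ := V A ν₀ ν₁ (k+1) j / V A ν₀ ν₁ k j

noncomputable def mm (hd : 0 < d) (k : ℕ) : ℝ := Finset.univ.inf' (univ_ne hd) (rr A ν₀ ν₁ k)

noncomputable def MM (hd : 0 < d) (k : ℕ) : ℝ := Finset.univ.sup' (univ_ne hd) (rr A ν₀ ν₁ k)

include hd hA hν₀ hν₁ in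
lemma rr_pos : ∀ k j, 0 < rr A ν₀ ν₁ k j := fun k j =>
  div_pos (V_pos A ν₀ ν₁ hd hA hν₀ hν₁ (k+1) j) (V_pos A ν₀ ν₁ hd hA hν₀ hν₁ k j)

include hA hν₀ hν₁ in
lemma mm_pos : ∀ k, 0 < mm A ν₀ ν₁ hd k := by
  intro k
  obtain ⟨j, _, hj⟩ := Finset.exists_mem_eq_inf' (univ_ne hd) (rr A ν₀ ν₁ k)
  rw [mm, hj]; exact rr_pos A ν₀ ν₁ hd hA hν₀ hν₁ k j

lemma mm_le_rr (k : ℕ) (j : Fin d) : mm A ν₀ ν₁ hd k ≤ rr A ν₀ ν₁ k j :=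
  Finset.inf'_le _ (Finset.mem_univ j)

lemma rr_le_MM (k : ℕ) (j : Fin d) : rr A ν₀ ν₁ k j ≤ MM A ν₀ ν₁ hd k :=
  Finset.le_sup' _ (Finset.mem_univ j)

lemma mm_le_MM (k : ℕ) : mm A ν₀ ν₁ hd k ≤ MM A ν₀ ν₁ hd k :=
  le_trans (mm_le_rr A ν₀ ν₁ hd k ⟨0, hd⟩) (rr_le_MM A ν₀ ν₁ hd k ⟨0, hd⟩)

include hd hA hν₀ hν₁ in
lemma sI_pos : ∀ k i, 0 < sI A ν₀ ν₁ k i := fun k i =>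
  div_pos (rowsum_pos A ν₀ ν₁ hd hA hν₀ hν₁ (k+1) i) (rowsum_pos A ν₀ ν₁ hd hA hν₀ hν₁ k i)

variable (δ : ℝ)

include hd hA hν₀ hν₁ in
lemma sBound (hδ : 0 < δ)
    (hδw : ∀ k i j, δ * (∑ j', A i j' * V A ν₀ ν₁ k j') ≤ A i j * V A ν₀ ν₁ k j) :
    ∀ k i, mm A ν₀ ν₁ hd k + δ * (MM A ν₀ ν₁ hd k - mm A ν₀ ν₁ hd k) ≤ sI A ν₀ ν₁ k i ∧
      sI A ν₀ ν₁ k i ≤ MM A ν₀ ν₁ hd k - δ * (MM A ν₀ ν₁ hd k - mm A ν₀ ν₁ hd k) := by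
  intro k i
  have hVpos := V_pos A ν₀ ν₁ hd hA hν₀ hν₁
  set T := ∑ j, A i j * V A ν₀ ν₁ k j with hTdef
  have hT : 0 < T := rowsum_pos A ν₀ ν₁ hd hA hν₀ hν₁ k i
  have hΔnn : 0 ≤ MM A ν₀ ν₁ hd k - mm A ν₀ ν₁ hd k :=
    sub_nonneg.mpr (mm_le_MM A ν₀ ν₁ hd k)
  have hrw : ∑ j, A i j * V A ν₀ ν₁ (k+1) j = ∑ j, (A i j * V A ν₀ ν₁ k j) * rr A ν₀ ν₁ k j := by
    refine Finset.sum_congr rfl fun j _ => ?_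
    rw [rr]
    field_simp [ne_of_gt (hVpos k j)]
  constructor
  · -- lower bound
    obtain ⟨jx, _, hjx⟩ := Finset.exists_mem_eq_sup' (univ_ne hd) (rr A ν₀ ν₁ k)
    have h1 : δ * T * (MM A ν₀ ν₁ hd k - mm A ν₀ ν₁ hd k)
        ≤ (A i jx * V A ν₀ ν₁ k jx) * (MM A ν₀ ν₁ hd k - mm A ν₀ ν₁ hd k) :=
      mul_le_mul_of_nonneg_right (hδw k i jx) hΔnn
    have h2 : (A i jx * V A ν₀ ν₁ k jx) * (MM A ν₀ ν₁ hd k - mm A ν₀ ν₁ hd k)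
        ≤ ∑ j, (A i j * V A ν₀ ν₁ k j) * (rr A ν₀ ν₁ k j - mm A ν₀ ν₁ hd k) := by
      have : (A i jx * V A ν₀ ν₁ k jx) * (MM A ν₀ ν₁ hd k - mm A ν₀ ν₁ hd k)
          = (A i jx * V A ν₀ ν₁ k jx) * (rr A ν₀ ν₁ k jx - mm A ν₀ ν₁ hd k) := by
        rw [MM, ← hjx]
      rw [this]
      refine Finset.single_le_sum (f := fun j => (A i j * V A ν₀ ν₁ k j) * (rr A ν₀ ν₁ k j - mm A ν₀ ν₁ hd k)) (fun j _ => ?_) (Finset.mem_univ jx)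
      exact mul_nonneg (le_of_lt (mul_pos (hA i j) (hVpos k j)))
        (sub_nonneg.mpr (mm_le_rr A ν₀ ν₁ hd k j))
    have expand : ∑ j, (A i j * V A ν₀ ν₁ k j) * rr A ν₀ ν₁ k j
        = mm A ν₀ ν₁ hd k * T + ∑ j, (A i j * V A ν₀ ν₁ k j) * (rr A ν₀ ν₁ k j - mm A ν₀ ν₁ hd k) := by
      rw [hTdef, Finset.mul_sum, ← Finset.sum_add_distrib]
      exact Finset.sum_congr rfl fun j _ => by ring
    rw [sI, ← hTdef, le_div_iff₀ hT, hrw, expand]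
    nlinarith [h1, h2]
  · -- upper bound
    obtain ⟨jn, _, hjn⟩ := Finset.exists_mem_eq_inf' (univ_ne hd) (rr A ν₀ ν₁ k)
    have h1 : δ * T * (MM A ν₀ ν₁ hd k - mm A ν₀ ν₁ hd k)
        ≤ (A i jn * V A ν₀ ν₁ k jn) * (MM A ν₀ ν₁ hd k - mm A ν₀ ν₁ hd k) :=
      mul_le_mul_of_nonneg_right (hδw k i jn) hΔnn
    have h2 : (A i jn * V A ν₀ ν₁ k jn) * (MM A ν₀ ν₁ hd k - mm A ν₀ ν₁ hd k)
        ≤ ∑ j, (A i j * V A ν₀ ν₁ k j) * (MM A ν₀ ν₁ hd k - rr A ν₀ ν₁ k j) := by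
      have : (A i jn * V A ν₀ ν₁ k jn) * (MM A ν₀ ν₁ hd k - mm A ν₀ ν₁ hd k)
          = (A i jn * V A ν₀ ν₁ k jn) * (MM A ν₀ ν₁ hd k - rr A ν₀ ν₁ k jn) := by
        rw [mm, ← hjn]
      rw [this]
      refine Finset.single_le_sum (f := fun j => (A i j * V A ν₀ ν₁ k j) * (MM A ν₀ ν₁ hd k - rr A ν₀ ν₁ k j)) (fun j _ => ?_) (Finset.mem_univ jn)
      exact mul_nonneg (le_of_lt (mul_pos (hA i j) (hVpos k j)))
        (sub_nonneg.mpr (rr_le_MM A ν₀ ν₁ hd k j))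
    have expand : ∑ j, (A i j * V A ν₀ ν₁ k j) * rr A ν₀ ν₁ k j
        = MM A ν₀ ν₁ hd k * T - ∑ j, (A i j * V A ν₀ ν₁ k j) * (MM A ν₀ ν₁ hd k - rr A ν₀ ν₁ k j) := by
      rw [hTdef, Finset.mul_sum, ← Finset.sum_sub_distrib]
      exact Finset.sum_congr rfl fun j _ => by ring
    rw [sI, ← hTdef, div_le_iff₀ hT, hrw, expand]
    nlinarith [h1, h2]
include hd hA hν₀ hν₁ in
lemma U_succ_eq : ∀ k i, U A ν₀ ν₁ (k+1) i = U A ν₀ ν₁ k i / sI A ν₀ ν₁ k i := by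
  intro k i
  have h1 := ne_of_gt (rowsum_pos A ν₀ ν₁ hd hA hν₀ hν₁ k i)
  have h2 := ne_of_gt (rowsum_pos A ν₀ ν₁ hd hA hν₀ hν₁ (k+1) i)
  rw [U, U, sI]
  field_simp

include hd hA hν₀ hν₁ in
lemma rBound (hδ : 0 < δ)
    (hδw : ∀ k i j, δ * (∑ j', A i j' * V A ν₀ ν₁ k j') ≤ A i j * V A ν₀ ν₁ k j) :
    ∀ k j, mm A ν₀ ν₁ hd k + δ * (MM A ν₀ ν₁ hd k - mm A ν₀ ν₁ hd k) ≤ rr A ν₀ ν₁ (k+1) j ∧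
      rr A ν₀ ν₁ (k+1) j ≤ MM A ν₀ ν₁ hd k - δ * (MM A ν₀ ν₁ hd k - mm A ν₀ ν₁ hd k) := by
  intro k j
  have hsB := sBound A ν₀ ν₁ hd hA hν₀ hν₁ δ hδ hδw k
  set lo := mm A ν₀ ν₁ hd k + δ * (MM A ν₀ ν₁ hd k - mm A ν₀ ν₁ hd k) with hlodef
  set hi := MM A ν₀ ν₁ hd k - δ * (MM A ν₀ ν₁ hd k - mm A ν₀ ν₁ hd k) with hhidef
  have hΔnn : 0 ≤ MM A ν₀ ν₁ hd k - mm A ν₀ ν₁ hd k := sub_nonneg.mpr (mm_le_MM A ν₀ ν₁ hd k)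
  have hlopos : 0 < lo := by
    have := mm_pos A ν₀ ν₁ hd hA hν₀ hν₁ k
    have := mul_nonneg (le_of_lt hδ) hΔnn
    rw [hlodef]; linarith
  have hhipos : 0 < hi := lt_of_lt_of_le (sI_pos A ν₀ ν₁ hd hA hν₀ hν₁ k ⟨0,hd⟩) (hsB ⟨0,hd⟩).2
  set N := ∑ i, A i j * U A ν₀ ν₁ k i with hNdef
  set D := ∑ i, A i j * U A ν₀ ν₁ (k+1) i with hDdef
  have hN : 0 < N := colsumU_pos A ν₀ ν₁ hd hA hν₀ hν₁ k j
  have hD : 0 < D := colsumU_pos A ν₀ ν₁ hd hA hν₀ hν₁ (k+1) j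
  have hrr : rr A ν₀ ν₁ (k+1) j = N / D := by
    rw [rr, V_succ, V_succ, ← hNdef, ← hDdef]
    rw [div_div_div_comm, div_self (ne_of_gt (hν₁ j)), one_div, inv_div]
  have hD_le : D ≤ N / lo := by
    rw [hNdef, Finset.sum_div, hDdef]
    refine Finset.sum_le_sum fun i _ => ?_
    rw [U_succ_eq A ν₀ ν₁ hd hA hν₀ hν₁ k i, mul_div_assoc']
    exact div_le_div_of_nonneg_left
      (le_of_lt (mul_pos (hA i j) (U_pos A ν₀ ν₁ hd hA hν₀ hν₁ k i)))
      hlopos (hsB i).1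
  have hD_ge : N / hi ≤ D := by
    rw [hNdef, Finset.sum_div, hDdef]
    refine Finset.sum_le_sum fun i _ => ?_
    rw [U_succ_eq A ν₀ ν₁ hd hA hν₀ hν₁ k i, mul_div_assoc']
    exact div_le_div_of_nonneg_left
      (le_of_lt (mul_pos (hA i j) (U_pos A ν₀ ν₁ hd hA hν₀ hν₁ k i)))
      (sI_pos A ν₀ ν₁ hd hA hν₀ hν₁ k i) (hsB i).2
  constructor
  · rw [hrr, le_div_iff₀ hD]
    calc lo * D ≤ lo * (N / lo) := mul_le_mul_of_nonneg_left hD_le (le_of_lt hlopos)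
      _ = N := mul_div_cancel₀ N (ne_of_gt hlopos)
  · rw [hrr, div_le_iff₀ hD]
    calc N = hi * (N / hi) := (mul_div_cancel₀ N (ne_of_gt hhipos)).symm
      _ ≤ hi * D := mul_le_mul_of_nonneg_left hD_ge (le_of_lt hhipos)

include hd hA hν₀ hν₁ in
lemma mm_MM_step (hδ : 0 < δ)
    (hδw : ∀ k i j, δ * (∑ j', A i j' * V A ν₀ ν₁ k j') ≤ A i j * V A ν₀ ν₁ k j) (k : ℕ) :
    mm A ν₀ ν₁ hd k + δ * (MM A ν₀ ν₁ hd k - mm A ν₀ ν₁ hd k) ≤ mm A ν₀ ν₁ hd (k+1) ∧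
      MM A ν₀ ν₁ hd (k+1) ≤ MM A ν₀ ν₁ hd k - δ * (MM A ν₀ ν₁ hd k - mm A ν₀ ν₁ hd k) :=
  ⟨Finset.le_inf' _ _ fun j _ => (rBound A ν₀ ν₁ hd hA hν₀ hν₁ δ hδ hδw k j).1,
   Finset.sup'_le _ _ fun j _ => (rBound A ν₀ ν₁ hd hA hν₀ hν₁ δ hδ hδw k j).2⟩

include hd hA hν₀ hν₁ in
lemma mm_mono (hδ : 0 < δ)
    (hδw : ∀ k i j, δ * (∑ j', A i j' * V A ν₀ ν₁ k j') ≤ A i j * V A ν₀ ν₁ k j) :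
    ∀ k, mm A ν₀ ν₁ hd 0 ≤ mm A ν₀ ν₁ hd k := by
  intro k
  induction k with
  | zero => exact le_refl _
  | succ k ih =>
    have h := (mm_MM_step A ν₀ ν₁ hd hA hν₀ hν₁ δ hδ hδw k).1
    have hΔnn : 0 ≤ MM A ν₀ ν₁ hd k - mm A ν₀ ν₁ hd k := sub_nonneg.mpr (mm_le_MM A ν₀ ν₁ hd k)
    nlinarith [mul_nonneg (le_of_lt hδ) hΔnn]

include hd hA hν₀ hν₁ in
lemma Δ_decay (hδ : 0 < δ) (hδ4 : δ ≤ 1/4)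
    (hδw : ∀ k i j, δ * (∑ j', A i j' * V A ν₀ ν₁ k j') ≤ A i j * V A ν₀ ν₁ k j) :
    ∀ k, MM A ν₀ ν₁ hd k - mm A ν₀ ν₁ hd k
      ≤ (MM A ν₀ ν₁ hd 0 - mm A ν₀ ν₁ hd 0) * (1 - 2*δ)^k := by
  intro k
  induction k with
  | zero => simp
  | succ k ih =>
    have h1 := (mm_MM_step A ν₀ ν₁ hd hA hν₀ hν₁ δ hδ hδw k).1
    have h2 := (mm_MM_step A ν₀ ν₁ hd hA hν₀ hν₁ δ hδ hδw k).2
    have hq : (0:ℝ) ≤ 1 - 2*δ := by linarith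
    calc MM A ν₀ ν₁ hd (k+1) - mm A ν₀ ν₁ hd (k+1)
        ≤ (1 - 2*δ) * (MM A ν₀ ν₁ hd k - mm A ν₀ ν₁ hd k) := by linarith
      _ ≤ (1 - 2*δ) * ((MM A ν₀ ν₁ hd 0 - mm A ν₀ ν₁ hd 0) * (1 - 2*δ)^k) :=
          mul_le_mul_of_nonneg_left ih hq
      _ = (MM A ν₀ ν₁ hd 0 - mm A ν₀ ν₁ hd 0) * (1 - 2*δ)^(k+1) := by ring

noncomputable def E (k : ℕ) (i j : Fin d) : ℝ := U A ν₀ ν₁ k i * A i j * V A ν₀ ν₁ (k+1) j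

include hd hA hν₀ hν₁ in
lemma E_pos : ∀ k i j, 0 < E A ν₀ ν₁ k i j := fun k i j =>
  mul_pos (mul_pos (U_pos A ν₀ ν₁ hd hA hν₀ hν₁ k i) (hA i j))
    (V_pos A ν₀ ν₁ hd hA hν₀ hν₁ (k+1) j)

include hd hA hν₀ hν₁ in
lemma E_ratio (k : ℕ) (i j : Fin d) :
    E A ν₀ ν₁ (k+1) i j = E A ν₀ ν₁ k i j * (rr A ν₀ ν₁ (k+1) j / sI A ν₀ ν₁ k i) := by
  rw [E, E, U_succ_eq A ν₀ ν₁ hd hA hν₀ hν₁ k i, rr]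
  have h1 := ne_of_gt (V_pos A ν₀ ν₁ hd hA hν₀ hν₁ (k+1) j)
  have h2 := ne_of_gt (sI_pos A ν₀ ν₁ hd hA hν₀ hν₁ k i)
  field_simp
include hd hA hν₀ hν₁ in
lemma E_log_dist (hδ : 0 < δ) (hδ4 : δ ≤ 1/4)
    (hδw : ∀ k i j, δ * (∑ j', A i j' * V A ν₀ ν₁ k j') ≤ A i j * V A ν₀ ν₁ k j)
    (k : ℕ) (i j : Fin d) :
    dist (Real.log (E A ν₀ ν₁ k i j)) (Real.log (E A ν₀ ν₁ (k+1) i j))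
      ≤ ((MM A ν₀ ν₁ hd 0 - mm A ν₀ ν₁ hd 0) / mm A ν₀ ν₁ hd 0) * (1 - 2*δ)^k := by
  have hmk := mm_pos A ν₀ ν₁ hd hA hν₀ hν₁ k
  have hm0 := mm_pos A ν₀ ν₁ hd hA hν₀ hν₁ 0
  have hMk : 0 < MM A ν₀ ν₁ hd k := lt_of_lt_of_le hmk (mm_le_MM A ν₀ ν₁ hd k)
  have hΔnn : 0 ≤ MM A ν₀ ν₁ hd k - mm A ν₀ ν₁ hd k := sub_nonneg.mpr (mm_le_MM A ν₀ ν₁ hd k)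
  have hδΔ : 0 ≤ δ * (MM A ν₀ ν₁ hd k - mm A ν₀ ν₁ hd k) := mul_nonneg (le_of_lt hδ) hΔnn
  have hrB := rBound A ν₀ ν₁ hd hA hν₀ hν₁ δ hδ hδw k j
  have hsB := sBound A ν₀ ν₁ hd hA hν₀ hν₁ δ hδ hδw k i
  have hrr_ge : mm A ν₀ ν₁ hd k ≤ rr A ν₀ ν₁ (k+1) j := by linarith [hrB.1]
  have hrr_le : rr A ν₀ ν₁ (k+1) j ≤ MM A ν₀ ν₁ hd k := by linarith [hrB.2]
  have hsI_ge : mm A ν₀ ν₁ hd k ≤ sI A ν₀ ν₁ k i := by linarith [hsB.1]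
  have hsI_le : sI A ν₀ ν₁ k i ≤ MM A ν₀ ν₁ hd k := by linarith [hsB.2]
  have hsIpos := sI_pos A ν₀ ν₁ hd hA hν₀ hν₁ k i
  have hrrpos := rr_pos A ν₀ ν₁ hd hA hν₀ hν₁ (k+1) j
  have hxpos : 0 < rr A ν₀ ν₁ (k+1) j / sI A ν₀ ν₁ k i := div_pos hrrpos hsIpos
  have hratio_lo : mm A ν₀ ν₁ hd k / MM A ν₀ ν₁ hd k ≤ rr A ν₀ ν₁ (k+1) j / sI A ν₀ ν₁ k i :=
    div_le_div₀ (le_of_lt hrrpos) hrr_ge hsIpos hsI_le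
  have hratio_hi : rr A ν₀ ν₁ (k+1) j / sI A ν₀ ν₁ k i ≤ MM A ν₀ ν₁ hd k / mm A ν₀ ν₁ hd k :=
    div_le_div₀ (le_of_lt hMk) hrr_le hmk hsI_ge
  have hlogeq : Real.log (E A ν₀ ν₁ (k+1) i j)
      = Real.log (E A ν₀ ν₁ k i j) + Real.log (rr A ν₀ ν₁ (k+1) j / sI A ν₀ ν₁ k i) := by
    rw [E_ratio A ν₀ ν₁ hd hA hν₀ hν₁ k i j]
    exact Real.log_mul (ne_of_gt (E_pos A ν₀ ν₁ hd hA hν₀ hν₁ k i j)) (ne_of_gt hxpos)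
  have habs : dist (Real.log (E A ν₀ ν₁ k i j)) (Real.log (E A ν₀ ν₁ (k+1) i j))
      = |Real.log (rr A ν₀ ν₁ (k+1) j / sI A ν₀ ν₁ k i)| := by
    rw [Real.dist_eq, hlogeq]
    rw [show Real.log (E A ν₀ ν₁ k i j) - (Real.log (E A ν₀ ν₁ k i j)
      + Real.log (rr A ν₀ ν₁ (k+1) j / sI A ν₀ ν₁ k i))
      = -(Real.log (rr A ν₀ ν₁ (k+1) j / sI A ν₀ ν₁ k i)) by ring, abs_neg]
  rw [habs]
  have hstep1 : |Real.log (rr A ν₀ ν₁ (k+1) j / sI A ν₀ ν₁ k i)|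
      ≤ Real.log (MM A ν₀ ν₁ hd k / mm A ν₀ ν₁ hd k) := by
    rw [abs_le]
    constructor
    · have : Real.log (mm A ν₀ ν₁ hd k / MM A ν₀ ν₁ hd k)
          = -Real.log (MM A ν₀ ν₁ hd k / mm A ν₀ ν₁ hd k) := by
        rw [Real.log_div (ne_of_gt hmk) (ne_of_gt hMk),
          Real.log_div (ne_of_gt hMk) (ne_of_gt hmk)]
        ring
      rw [← this]
      exact Real.log_le_log (div_pos hmk hMk) hratio_lo
    · exact Real.log_le_log hxpos hratio_hi
  refine le_trans hstep1 (le_trans (Real.log_le_sub_one_of_pos (div_pos hMk hmk)) ?_)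
  rw [div_sub_one (ne_of_gt hmk)]
  have hnum := Δ_decay A ν₀ ν₁ hd hA hν₀ hν₁ δ hδ hδ4 hδw k
  have hq : (0:ℝ) ≤ 1 - 2*δ := by linarith
  have hΔ0nn : 0 ≤ MM A ν₀ ν₁ hd 0 - mm A ν₀ ν₁ hd 0 := sub_nonneg.mpr (mm_le_MM A ν₀ ν₁ hd 0)
  calc (MM A ν₀ ν₁ hd k - mm A ν₀ ν₁ hd k) / mm A ν₀ ν₁ hd k
      ≤ ((MM A ν₀ ν₁ hd 0 - mm A ν₀ ν₁ hd 0) * (1 - 2*δ)^k) / mm A ν₀ ν₁ hd 0 :=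
        div_le_div₀ (mul_nonneg hΔ0nn (pow_nonneg hq k)) hnum hm0
          (mm_mono A ν₀ ν₁ hd hA hν₀ hν₁ δ hδ hδw k)
    _ = ((MM A ν₀ ν₁ hd 0 - mm A ν₀ ν₁ hd 0) / mm A ν₀ ν₁ hd 0) * (1 - 2*δ)^k := by
        rw [div_mul_eq_mul_div]

include hd hA hν₀ hν₁ in
lemma E_limit (hδ : 0 < δ) (hδ4 : δ ≤ 1/4)
    (hδw : ∀ k i j, δ * (∑ j', A i j' * V A ν₀ ν₁ k j') ≤ A i j * V A ν₀ ν₁ k j) :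
    ∃ G : Fin d → Fin d → ℝ, (∀ i j, 0 < G i j) ∧
      ∀ i j, Filter.Tendsto (fun k => E A ν₀ ν₁ k i j) Filter.atTop (nhds (G i j)) := by
  have hcauchy : ∀ i j, ∃ l, Filter.Tendsto (fun k => Real.log (E A ν₀ ν₁ k i j))
      Filter.atTop (nhds l) := by
    intro i j
    apply cauchySeq_tendsto_of_complete
    apply cauchySeq_of_le_geometric (1 - 2*δ)
      ((MM A ν₀ ν₁ hd 0 - mm A ν₀ ν₁ hd 0) / mm A ν₀ ν₁ hd 0) (by linarith)
    exact fun n => E_log_dist A ν₀ ν₁ hd hA hν₀ hν₁ δ hδ hδ4 hδw n i j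
  choose L hL using hcauchy
  refine ⟨fun i j => Real.exp (L i j), fun i j => Real.exp_pos _, fun i j => ?_⟩
  have hcomp := (Real.continuous_exp.tendsto (L i j)).comp (hL i j)
  have : (fun k => Real.exp (Real.log (E A ν₀ ν₁ k i j))) = fun k => E A ν₀ ν₁ k i j :=
    funext fun k => Real.exp_log (E_pos A ν₀ ν₁ hd hA hν₀ hν₁ k i j)
  rw [show Real.exp ∘ (fun k => Real.log (E A ν₀ ν₁ k i j))
    = fun k => Real.exp (Real.log (E A ν₀ ν₁ k i j)) from rfl, this] at hcomp
  exact hcomp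
lemma gibbs_aux (t s : ℝ) (ht : 0 ≤ t) (hs : 0 < s) : t - s ≤ t * Real.log (t / s) := by
  rcases eq_or_lt_of_le ht with h | h
  · simp [← h]; linarith
  · have h1 : Real.log (s / t) ≤ s / t - 1 := Real.log_le_sub_one_of_pos (div_pos hs h)
    have h2 : Real.log (s / t) = - Real.log (t / s) := by
      rw [Real.log_div (ne_of_gt hs) (ne_of_gt h), Real.log_div (ne_of_gt h) (ne_of_gt hs)]; ring
    rw [h2] at h1
    have h3 : t * (-Real.log (t/s)) ≤ t * (s/t - 1) := by
      exact mul_le_mul_of_nonneg_left h1 ht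
    have h4 : t * (s/t - 1) = s - t := by field_simp
    nlinarith [h3, h4]

end Stmt16

/-- Alternating KL projections with mismatched masses: starting from a positive
matrix `α`, the even iterates converge to the KL projection of `α` onto
`Π(ν̃₀, ν₁)` and the odd iterates converge to `m₀` times that projection. -/
theorem stmt_16 (d : ℕ) (hd : 0 < d)
    (ν₀ ν₁ : Fin d → ℝ) (hν₀ : ∀ i, 0 < ν₀ i) (hν₁ : ∀ j, 0 < ν₁ j)
    (m₀ : ℝ) (hm₀def : m₀ = ∑ i, ν₀ i) (hm₀ : 1 < m₀) (hν₁1 : ∑ j, ν₁ j = 1)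
    (ν₀t : Fin d → ℝ) (hν₀t : ν₀t = fun i => ν₀ i / m₀)
    (α : Fin d → Fin d → ℝ) (hα : ∀ i j, 0 < α i j)
    (KL : (Fin d → Fin d → ℝ) → (Fin d → Fin d → ℝ) → ℝ)
    (hKL : KL = fun γ β => ∑ i : Fin d, ∑ j : Fin d, γ i j * Real.log (γ i j / β i j))
    -- the KL projections onto the two affine constraint sets (row/column rescaling):
    (rowProj colProj : (Fin d → Fin d → ℝ) → (Fin d → Fin d → ℝ))
    (hrowProj : rowProj = fun γ => fun i j => ν₀ i * γ i j / ∑ j', γ i j')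
    (hcolProj : colProj = fun γ => fun i j => ν₁ j * γ i j / ∑ i', γ i' j)
    (γseq : ℕ → Fin d → Fin d → ℝ)
    (hγ0 : γseq 0 = α)
    (hγsucc : ∀ k, γseq (k + 1) = if Even k then rowProj (γseq k) else colProj (γseq k)) :
    ∃ γstar : Fin d → Fin d → ℝ,
      ((∀ i j, 0 ≤ γstar i j) ∧ (∀ i, ∑ j, γstar i j = ν₀t i) ∧
        (∀ j, ∑ i, γstar i j = ν₁ j)) ∧
      (∀ γ : Fin d → Fin d → ℝ,
        (∀ i j, 0 ≤ γ i j) → (∀ i, ∑ j, γ i j = ν₀t i) → (∀ j, ∑ i, γ i j = ν₁ j) →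
        KL γstar α ≤ KL γ α) ∧
      Filter.Tendsto (fun k => γseq (2 * k)) Filter.atTop (nhds γstar) ∧
      Filter.Tendsto (fun k => γseq (2 * k + 1)) Filter.atTop
        (nhds (fun i j => m₀ * γstar i j)) := by
  classical
  open Stmt16 Filter in
  -- abbreviations
  have hVpos := Stmt16.V_pos α ν₀ ν₁ hd hα hν₀ hν₁
  have hUpos := Stmt16.U_pos α ν₀ ν₁ hd hα hν₀ hν₁
  have hEpos := Stmt16.E_pos α ν₀ ν₁ hd hα hν₀ hν₁
  have hrowsum := Stmt16.rowsum_pos α ν₀ ν₁ hd hα hν₀ hν₁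
  have hcolsumU := Stmt16.colsumU_pos α ν₀ ν₁ hd hα hν₀ hν₁
  obtain ⟨δ, hδpos, hδ4, hδw⟩ := Stmt16.exists_delta α ν₀ ν₁ hd hα hν₀ hν₁
  obtain ⟨G, hGpos, hG⟩ := Stmt16.E_limit α ν₀ ν₁ hd hα hν₀ hν₁ δ hδpos hδ4 hδw
  have hoe : ∀ k : ℕ, Even (2*k) := fun k => ⟨k, two_mul k⟩
  have hood : ∀ k : ℕ, ¬ Even (2*k+1) := by
    intro k h; rw [Nat.even_iff] at h; omega
  -- projection steps in terms of U, V
  have colstep : ∀ k, colProj (fun i j => Stmt16.U α ν₀ ν₁ k i * α i j * Stmt16.V α ν₀ ν₁ k j)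
      = fun i j => Stmt16.U α ν₀ ν₁ k i * α i j * Stmt16.V α ν₀ ν₁ (k+1) j := by
    intro k
    funext i j
    simp only [hcolProj]
    have hden : ∑ i', Stmt16.U α ν₀ ν₁ k i' * α i' j * Stmt16.V α ν₀ ν₁ k j
        = (∑ i', α i' j * Stmt16.U α ν₀ ν₁ k i') * Stmt16.V α ν₀ ν₁ k j := by
      rw [Finset.sum_mul]; exact Finset.sum_congr rfl fun i' _ => by ring
    rw [hden, Stmt16.V_succ]
    have h1 := ne_of_gt (hcolsumU k j)
    have h2 := ne_of_gt (hVpos k j)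
    field_simp
  have rowstep : ∀ k, rowProj (fun i j => Stmt16.U α ν₀ ν₁ k i * α i j * Stmt16.V α ν₀ ν₁ (k+1) j)
      = fun i j => Stmt16.U α ν₀ ν₁ (k+1) i * α i j * Stmt16.V α ν₀ ν₁ (k+1) j := by
    intro k
    funext i j
    simp only [hrowProj]
    have hden : ∑ j', Stmt16.U α ν₀ ν₁ k i * α i j' * Stmt16.V α ν₀ ν₁ (k+1) j'
        = Stmt16.U α ν₀ ν₁ k i * (∑ j', α i j' * Stmt16.V α ν₀ ν₁ (k+1) j') := by
      rw [Finset.mul_sum]; exact Finset.sum_congr rfl fun j' _ => by ring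
    rw [hden]
    rw [show Stmt16.U α ν₀ ν₁ (k+1) i = ν₀ i / ∑ j', α i j' * Stmt16.V α ν₀ ν₁ (k+1) j' from rfl]
    have h1 := ne_of_gt (hrowsum (k+1) i)
    have h2 := ne_of_gt (hUpos k i)
    field_simp
  have hform : ∀ k, γseq (2*k+1) = (fun i j => Stmt16.U α ν₀ ν₁ k i * α i j * Stmt16.V α ν₀ ν₁ k j)
      ∧ γseq (2*k+2) = fun i j => Stmt16.U α ν₀ ν₁ k i * α i j * Stmt16.V α ν₀ ν₁ (k+1) j := by
    intro k
    induction k with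
    | zero =>
      have h1 : γseq 1 = fun i j => Stmt16.U α ν₀ ν₁ 0 i * α i j * Stmt16.V α ν₀ ν₁ 0 j := by
        rw [hγsucc 0, if_pos (by decide : Even 0), hγ0, hrowProj]
        funext i j
        rw [show Stmt16.V α ν₀ ν₁ 0 j = 1 from rfl,
          show Stmt16.U α ν₀ ν₁ 0 i = ν₀ i / ∑ j', α i j' * Stmt16.V α ν₀ ν₁ 0 j' from rfl]
        simp only [show ∀ j' , Stmt16.V α ν₀ ν₁ 0 j' = 1 from fun _ => rfl, mul_one]
        ring
      refine ⟨h1, ?_⟩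
      rw [show (2*0+2 : ℕ) = 1+1 from rfl, hγsucc 1, if_neg (by decide : ¬ Even 1),
        show (2*0+1 : ℕ) = 1 from rfl] at *
      rw [h1]
      exact colstep 0
    | succ k ih =>
      have e1 : 2*(k+1)+1 = (2*k+2)+1 := by ring
      have h1 : γseq (2*(k+1)+1) = fun i j =>
          Stmt16.U α ν₀ ν₁ (k+1) i * α i j * Stmt16.V α ν₀ ν₁ (k+1) j := by
        rw [e1, hγsucc (2*k+2), if_pos (by rw [show 2*k+2 = 2*(k+1) by ring]; exact hoe (k+1)),
          ih.2]
        exact rowstep k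
      refine ⟨h1, ?_⟩
      have e2 : 2*(k+1)+2 = (2*(k+1)+1)+1 := by ring
      rw [e2, hγsucc (2*(k+1)+1), if_neg (hood (k+1)), h1]
      exact colstep (k+1)
  -- function-level convergence of the even iterates
  have hGfun : Filter.Tendsto (fun k => (fun i j => Stmt16.E α ν₀ ν₁ k i j))
      Filter.atTop (nhds G) := by
    rw [tendsto_pi_nhds]; intro i; rw [tendsto_pi_nhds]; intro j; exact hG i j
  have heven : Filter.Tendsto (fun k => γseq (2*k)) Filter.atTop (nhds G) := by
    refine (Filter.tendsto_add_atTop_iff_nat 1).mp ?_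
    have hseq : (fun n => γseq (2*(n+1))) = fun n => (fun i j => Stmt16.E α ν₀ ν₁ n i j) := by
      funext n
      rw [show 2*(n+1) = 2*n+2 by ring]
      exact (hform n).2
    show Filter.Tendsto (fun n => γseq (2*(n+1))) Filter.atTop (nhds G)
    rw [hseq]; exact hGfun
  -- column sums of the even iterates
  have hcolsumE : ∀ k j, ∑ i, Stmt16.E α ν₀ ν₁ k i j = ν₁ j := by
    intro k j
    have h : ∑ i, Stmt16.E α ν₀ ν₁ k i j
        = (∑ i, α i j * Stmt16.U α ν₀ ν₁ k i) * Stmt16.V α ν₀ ν₁ (k+1) j := by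
      rw [Finset.sum_mul]
      exact Finset.sum_congr rfl fun i _ => by rw [Stmt16.E]; ring
    rw [h, Stmt16.V_succ, mul_comm, div_mul_cancel₀ _ (ne_of_gt (hcolsumU k j))]
  have hGcol : ∀ j, ∑ i, G i j = ν₁ j := by
    intro j
    have h1 : Filter.Tendsto (fun k => ∑ i, Stmt16.E α ν₀ ν₁ k i j)
        Filter.atTop (nhds (∑ i, G i j)) := tendsto_finset_sum _ (fun i _ => hG i j)
    have h2 : (fun k => ∑ i, Stmt16.E α ν₀ ν₁ k i j) = fun _ => ν₁ j :=
      funext fun k => hcolsumE k j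
    rw [h2] at h1
    exact tendsto_nhds_unique h1 tendsto_const_nhds
  -- explicit form of the double projection
  have hexpand : ∀ X : Fin d → Fin d → ℝ, colProj (rowProj X) = fun i j =>
      ν₁ j * (ν₀ i * X i j / ∑ j', X i j') / (∑ i', ν₀ i' * X i' j / ∑ j', X i' j') := by
    intro X; simp only [hcolProj, hrowProj]
  have hRGpos : ∀ i, 0 < ∑ j', G i j' :=
    fun i => Finset.sum_pos (fun j _ => hGpos i j) (Stmt16.univ_ne hd)
  have hRtend : ∀ i, Filter.Tendsto (fun k => ∑ j', Stmt16.E α ν₀ ν₁ k i j')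
      Filter.atTop (nhds (∑ j', G i j')) :=
    fun i => tendsto_finset_sum _ (fun j _ => hG i j)
  have hrowtend : ∀ i j, Filter.Tendsto
      (fun k => ν₀ i * Stmt16.E α ν₀ ν₁ k i j / ∑ j', Stmt16.E α ν₀ ν₁ k i j')
      Filter.atTop (nhds (ν₀ i * G i j / ∑ j', G i j')) := fun i j =>
    (tendsto_const_nhds.mul (hG i j)).div (hRtend i) (ne_of_gt (hRGpos i))
  have hCpos : ∀ j, 0 < ∑ i', ν₀ i' * G i' j / ∑ j', G i' j' := fun j =>
    Finset.sum_pos (fun i _ => div_pos (mul_pos (hν₀ i) (hGpos i j)) (hRGpos i))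
      (Stmt16.univ_ne hd)
  have hCtend : ∀ j, Filter.Tendsto
      (fun k => ∑ i', ν₀ i' * Stmt16.E α ν₀ ν₁ k i' j / ∑ j', Stmt16.E α ν₀ ν₁ k i' j')
      Filter.atTop (nhds (∑ i', ν₀ i' * G i' j / ∑ j', G i' j')) :=
    fun j => tendsto_finset_sum _ (fun i _ => hrowtend i j)
  have hStend : Filter.Tendsto (fun k => colProj (rowProj (fun i j => Stmt16.E α ν₀ ν₁ k i j)))
      Filter.atTop (nhds (colProj (rowProj G))) := by
    rw [tendsto_pi_nhds]; intro i; rw [tendsto_pi_nhds]; intro j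
    have hx : ∀ k : ℕ, colProj (rowProj (fun i j => Stmt16.E α ν₀ ν₁ k i j)) i j
        = ν₁ j * (ν₀ i * Stmt16.E α ν₀ ν₁ k i j / ∑ j', Stmt16.E α ν₀ ν₁ k i j')
          / (∑ i', ν₀ i' * Stmt16.E α ν₀ ν₁ k i' j / ∑ j', Stmt16.E α ν₀ ν₁ k i' j') := by
      intro k; rw [hexpand]
    have hy : colProj (rowProj G) i j = ν₁ j * (ν₀ i * G i j / ∑ j', G i j')
        / (∑ i', ν₀ i' * G i' j / ∑ j', G i' j') := by rw [hexpand]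
    simp only [hx, hy]
    exact (tendsto_const_nhds.mul (hrowtend i j)).div (hCtend j) (ne_of_gt (hCpos j))
  have hEsucc : ∀ k, (fun i j => Stmt16.E α ν₀ ν₁ (k+1) i j)
      = colProj (rowProj (fun i j => Stmt16.E α ν₀ ν₁ k i j)) := by
    intro k
    have h1 : γseq (2*(k+1)+2) = colProj (γseq (2*(k+1)+1)) := by
      rw [show 2*(k+1)+2 = (2*(k+1)+1)+1 by ring, hγsucc _, if_neg (hood (k+1))]
    have h2 : γseq (2*(k+1)+1) = rowProj (γseq (2*k+2)) := by
      rw [show 2*(k+1)+1 = (2*k+2)+1 by ring, hγsucc _,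
        if_pos (by rw [show 2*k+2 = 2*(k+1) by ring]; exact hoe (k+1))]
    have h3 := (hform (k+1)).2
    rw [h1, h2, (hform k).2] at h3
    exact h3.symm
  have hfix : colProj (rowProj G) = G := by
    have h1 : Filter.Tendsto (fun k => (fun i j => Stmt16.E α ν₀ ν₁ (k+1) i j))
        Filter.atTop (nhds G) := (Filter.tendsto_add_atTop_iff_nat 1).mpr hGfun
    have h2 : (fun k => (fun i j => Stmt16.E α ν₀ ν₁ (k+1) i j))
        = fun k => colProj (rowProj (fun i j => Stmt16.E α ν₀ ν₁ k i j)) := funext hEsucc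
    rw [h2] at h1
    exact tendsto_nhds_unique hStend h1
  -- row sums of G equal ν₀t
  have hfixpt : ∀ i j, ν₁ j * (ν₀ i * G i j / ∑ j', G i j')
      / (∑ i', ν₀ i' * G i' j / ∑ j', G i' j') = G i j := by
    intro i j
    conv_rhs => rw [← hfix]
    rw [hexpand]
  have hRC : ∀ i j, ν₀ i * ν₁ j
      = (∑ j', G i j') * (∑ i', ν₀ i' * G i' j / ∑ j', G i' j') := by
    intro i j
    have h := hfixpt i j
    have hG0 := ne_of_gt (hGpos i j)
    have hR0 := ne_of_gt (hRGpos i)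
    have hC0 := ne_of_gt (hCpos j)
    rw [div_eq_iff hC0, mul_div_assoc] at h
    -- h : ν₁ j * (ν₀ i * (G i j / R)) = G i j * C
    have h3 : G i j * (ν₀ i * ν₁ j)
        = G i j * ((∑ j', G i j') * (∑ i', ν₀ i' * G i' j / ∑ j', G i' j')) := by
      have e : (∑ j', G i j') * (ν₁ j * (ν₀ i * (G i j / ∑ j', G i j')))
          = G i j * (ν₀ i * ν₁ j) := by
        field_simp
      calc G i j * (ν₀ i * ν₁ j)
          = (∑ j', G i j') * (ν₁ j * (ν₀ i * (G i j / ∑ j', G i j'))) := e.symm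
        _ = (∑ j', G i j') * (G i j * (∑ i', ν₀ i' * G i' j / ∑ j', G i' j')) := by rw [h]
        _ = G i j * ((∑ j', G i j') * (∑ i', ν₀ i' * G i' j / ∑ j', G i' j')) := by ring
    exact mul_left_cancel₀ hG0 h3
  have hmass : ∑ i, ∑ j', G i j' = 1 := by
    rw [Finset.sum_comm]
    rw [show ∑ j : Fin d, ∑ i, G i j = ∑ j, ν₁ j from
      Finset.sum_congr rfl fun j _ => hGcol j]
    exact hν₁1
  have hm₀pos : (0:ℝ) < m₀ := lt_trans one_pos hm₀
  have hRrow : ∀ i, ∑ j', G i j' = ν₀t i := by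
    set j0 : Fin d := ⟨0, hd⟩ with hj0
    have hCj0 : ∑ i', ν₀ i' * G i' j0 / ∑ j', G i' j' = m₀ * ν₁ j0 := by
      have h1 : ∀ i, ∑ j', G i j' = ν₀ i * ν₁ j0 / (∑ i', ν₀ i' * G i' j0 / ∑ j', G i' j') := by
        intro i
        rw [eq_div_iff (ne_of_gt (hCpos j0))]
        exact (hRC i j0).symm
      have h2 : (1:ℝ) = (∑ i, ν₀ i) * ν₁ j0 / (∑ i', ν₀ i' * G i' j0 / ∑ j', G i' j') := by
        rw [← hmass, Finset.sum_congr rfl fun i _ => h1 i, Finset.sum_mul, Finset.sum_div]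
      rw [eq_div_iff (ne_of_gt (hCpos j0)), one_mul] at h2
      rw [← hm₀def] at h2
      exact h2
    intro i
    have h := hRC i j0
    rw [hCj0] at h
    have hν₁0 := ne_of_gt (hν₁ j0)
    rw [hν₀t]
    have hmne := ne_of_gt hm₀pos
    have h' : ν₀ i * ν₁ j0 = ((∑ j', G i j') * m₀) * ν₁ j0 := by rw [h]; ring
    have h'' := mul_right_cancel₀ hν₁0 h'
    field_simp
    linarith
  -- odd iterates
  have hoddtend : Filter.Tendsto (fun k => γseq (2*k+1)) Filter.atTop
      (nhds (fun i j => m₀ * G i j)) := by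
    refine (Filter.tendsto_add_atTop_iff_nat 1).mp ?_
    have hseq : (fun n => γseq (2*(n+1)+1))
        = fun n => rowProj (fun i j => Stmt16.E α ν₀ ν₁ n i j) := by
      funext n
      rw [show 2*(n+1)+1 = (2*n+2)+1 by ring, hγsucc _,
        if_pos (by rw [show 2*n+2 = 2*(n+1) by ring]; exact hoe (n+1)), (hform n).2]
      rfl
    show Filter.Tendsto (fun n => γseq (2*(n+1)+1)) Filter.atTop (nhds (fun i j => m₀ * G i j))
    rw [hseq, tendsto_pi_nhds]; intro i; rw [tendsto_pi_nhds]; intro j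
    have hx : ∀ n : ℕ, rowProj (fun i j => Stmt16.E α ν₀ ν₁ n i j) i j
        = ν₀ i * Stmt16.E α ν₀ ν₁ n i j / ∑ j', Stmt16.E α ν₀ ν₁ n i j' := by
      intro n; rw [hrowProj]
    simp only [hx]
    have hlim := hrowtend i j
    have heq : ν₀ i * G i j / ∑ j', G i j' = m₀ * G i j := by
      rw [hRrow i, hν₀t]
      have := ne_of_gt (hν₀ i)
      field_simp
    rw [heq] at hlim
    exact hlim
  -- cross-ratio identity & scaling form of G
  have i0 : Fin d := ⟨0, hd⟩
  have hcr : ∀ i j, G i j * G i0 i0 * (α i i0 * α i0 j)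
      = G i i0 * G i0 j * (α i j * α i0 i0) := by
    intro i j
    have hseqcr : (fun k => Stmt16.E α ν₀ ν₁ k i j * Stmt16.E α ν₀ ν₁ k i0 i0 * (α i i0 * α i0 j))
        = fun k => Stmt16.E α ν₀ ν₁ k i i0 * Stmt16.E α ν₀ ν₁ k i0 j * (α i j * α i0 i0) := by
      funext k
      simp only [Stmt16.E]
      ring
    have t1 : Filter.Tendsto
        (fun k => Stmt16.E α ν₀ ν₁ k i j * Stmt16.E α ν₀ ν₁ k i0 i0 * (α i i0 * α i0 j))
        Filter.atTop (nhds (G i j * G i0 i0 * (α i i0 * α i0 j))) :=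
      ((hG i j).mul (hG i0 i0)).mul tendsto_const_nhds
    have t2 : Filter.Tendsto
        (fun k => Stmt16.E α ν₀ ν₁ k i i0 * Stmt16.E α ν₀ ν₁ k i0 j * (α i j * α i0 i0))
        Filter.atTop (nhds (G i i0 * G i0 j * (α i j * α i0 i0))) :=
      ((hG i i0).mul (hG i0 j)).mul tendsto_const_nhds
    rw [hseqcr] at t1
    exact tendsto_nhds_unique t1 t2
  set p : Fin d → ℝ := fun i => G i i0 * α i0 i0 / (α i i0 * G i0 i0) with hp
  set q : Fin d → ℝ := fun j => G i0 j / α i0 j with hq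
  have hppos : ∀ i, 0 < p i := fun i =>
    div_pos (mul_pos (hGpos i i0) (hα i0 i0)) (mul_pos (hα i i0) (hGpos i0 i0))
  have hqpos : ∀ j, 0 < q j := fun j => div_pos (hGpos i0 j) (hα i0 j)
  have hpq : ∀ i j, G i j = p i * α i j * q j := by
    intro i j
    rw [hp, hq]
    have h1 := ne_of_gt (hα i i0)
    have h2 := ne_of_gt (hα i0 j)
    have h3 := ne_of_gt (hGpos i0 i0)
    have h4 := ne_of_gt (hα i0 i0)
    field_simp
    linear_combination hcr i j
  -- masses
  have hmne := ne_of_gt hm₀pos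
  have hν₀tsum : ∑ i, ν₀t i = 1 := by
    rw [hν₀t]
    rw [show ∑ i, ν₀ i / m₀ = (∑ i, ν₀ i) / m₀ from (Finset.sum_div _ _ _).symm, ← hm₀def]
    exact div_self hmne
  -- optimality
  have hopt : ∀ γ : Fin d → Fin d → ℝ,
      (∀ i j, 0 ≤ γ i j) → (∀ i, ∑ j, γ i j = ν₀t i) → (∀ j, ∑ i, γ i j = ν₁ j) →
      KL G α ≤ KL γ α := by
    intro γ hγnn hγrow hγcol
    have hsplit : ∀ (X : Fin d → Fin d → ℝ), (∀ i, ∑ j, X i j = ν₀t i) →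
        (∀ j, ∑ i, X i j = ν₁ j) →
        ∑ i, ∑ j, X i j * (Real.log (p i) + Real.log (q j))
          = (∑ i, ν₀t i * Real.log (p i)) + ∑ j, ν₁ j * Real.log (q j) := by
      intro X hr hc
      have h1 : ∀ i, ∑ j, X i j * (Real.log (p i) + Real.log (q j))
          = (∑ j, X i j) * Real.log (p i) + ∑ j, X i j * Real.log (q j) := by
        intro i
        rw [show (∑ j, X i j * (Real.log (p i) + Real.log (q j)))
            = ∑ j, (X i j * Real.log (p i) + X i j * Real.log (q j)) from
          Finset.sum_congr rfl fun j _ => mul_add _ _ _, Finset.sum_add_distrib,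
          Finset.sum_mul]
      rw [Finset.sum_congr rfl fun i _ => h1 i, Finset.sum_add_distrib]
      congr 1
      · exact Finset.sum_congr rfl fun i _ => by rw [hr i]
      · rw [Finset.sum_comm]
        exact Finset.sum_congr rfl fun j _ => by rw [← Finset.sum_mul, hc j]
    have hptwise : ∀ (X : Fin d → Fin d → ℝ), (∀ i j, 0 ≤ X i j) → ∀ i j,
        X i j * Real.log (X i j / α i j)
          = X i j * Real.log (X i j / G i j) + X i j * (Real.log (p i) + Real.log (q j)) := by
      intro X hXnn i j
      rcases eq_or_lt_of_le (hXnn i j) with h | h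
      · simp [← h]
      · have hX0 := ne_of_gt h
        have hG0 := ne_of_gt (hGpos i j)
        have hα0 := ne_of_gt (hα i j)
        have hGa : G i j / α i j = p i * q j := by
          rw [hpq i j]; field_simp
        have hlog1 : Real.log (X i j / α i j)
            = Real.log (X i j / G i j) + Real.log (G i j / α i j) := by
          rw [← Real.log_mul (div_ne_zero hX0 hG0) (div_ne_zero hG0 hα0)]
          congr 1
          field_simp
        rw [hlog1, hGa, Real.log_mul (ne_of_gt (hppos i)) (ne_of_gt (hqpos j))]
        ring
    have hKLγ : KL γ α = (∑ i, ∑ j, γ i j * Real.log (γ i j / G i j))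
        + ((∑ i, ν₀t i * Real.log (p i)) + ∑ j, ν₁ j * Real.log (q j)) := by
      simp only [hKL]
      rw [show (∑ i, ∑ j, γ i j * Real.log (γ i j / α i j))
          = ∑ i, ∑ j, (γ i j * Real.log (γ i j / G i j)
            + γ i j * (Real.log (p i) + Real.log (q j))) from
        Finset.sum_congr rfl fun i _ => Finset.sum_congr rfl fun j _ => hptwise γ hγnn i j]
      rw [show (∑ i, ∑ j, (γ i j * Real.log (γ i j / G i j)
            + γ i j * (Real.log (p i) + Real.log (q j))))
          = (∑ i, ∑ j, γ i j * Real.log (γ i j / G i j))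
            + ∑ i, ∑ j, γ i j * (Real.log (p i) + Real.log (q j)) from by
        rw [← Finset.sum_add_distrib]
        exact Finset.sum_congr rfl fun i _ => Finset.sum_add_distrib]
      rw [hsplit γ hγrow hγcol]
    have hKLG : KL G α = (∑ i, ν₀t i * Real.log (p i)) + ∑ j, ν₁ j * Real.log (q j) := by
      simp only [hKL]
      rw [show (∑ i, ∑ j, G i j * Real.log (G i j / α i j))
          = ∑ i, ∑ j, (G i j * Real.log (G i j / G i j)
            + G i j * (Real.log (p i) + Real.log (q j))) from
        Finset.sum_congr rfl fun i _ => Finset.sum_congr rfl fun j _ =>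
          hptwise G (fun i j => le_of_lt (hGpos i j)) i j]
      have hz : ∀ i j, G i j * Real.log (G i j / G i j) = 0 := by
        intro i j
        rw [div_self (ne_of_gt (hGpos i j)), Real.log_one, mul_zero]
      rw [show (∑ i, ∑ j, (G i j * Real.log (G i j / G i j)
            + G i j * (Real.log (p i) + Real.log (q j))))
          = ∑ i, ∑ j, G i j * (Real.log (p i) + Real.log (q j)) from
        Finset.sum_congr rfl fun i _ => Finset.sum_congr rfl fun j _ => by rw [hz i j, zero_add]]
      exact hsplit G hRrow hGcol
    have hγmass : ∑ i, ∑ j, γ i j = 1 := by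
      rw [Finset.sum_congr rfl fun i _ => hγrow i]
      exact hν₀tsum
    have hGmass : ∑ i, ∑ j, G i j = 1 := by
      rw [Finset.sum_congr rfl fun i _ => hRrow i]
      exact hν₀tsum
    have hgibbs : 0 ≤ ∑ i, ∑ j, γ i j * Real.log (γ i j / G i j) := by
      have h1 : ∑ i, ∑ j, (γ i j - G i j) ≤ ∑ i, ∑ j, γ i j * Real.log (γ i j / G i j) :=
        Finset.sum_le_sum fun i _ => Finset.sum_le_sum fun j _ =>
          gibbs_aux (γ i j) (G i j) (hγnn i j) (hGpos i j)
      have h2 : ∑ i, ∑ j, (γ i j - G i j) = 0 := by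
        rw [show (∑ i, ∑ j, (γ i j - G i j))
            = (∑ i, ∑ j, γ i j) - ∑ i, ∑ j, G i j from by
          rw [← Finset.sum_sub_distrib]
          exact Finset.sum_congr rfl fun i _ => Finset.sum_sub_distrib _ _]
        rw [hγmass, hGmass, sub_self]
      linarith
    rw [hKLγ, hKLG]
    linarith
  exact ⟨G, ⟨fun i j => le_of_lt (hGpos i j), hRrow, hGcol⟩, hopt, heven, hoddtend⟩
end

section
/- Let J ⊂ ℝ be a compact interval and ν₀, ν₁ probability measures on J absolutely continuous with respect to Lebesgue measure. For the quadratic cost c(x,y) = (x-y)², there exists a unique optimal transport plan γ ∈ Π(ν₀,ν₁) minimizing ∫ c dγ, and γ is induced by a Borel map T : J → J, i.e., γ = (id × T)_# ν₀. -/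
open MeasureTheory
open ProbabilityTheory Set Filter Topology
open scoped ENNReal NNReal


lemma cdf_level (ν : Measure ℝ) [IsProbabilityMeasure ν] (hatom : ∀ x : ℝ, ν {x} = 0)
    (c : ℝ) (hc0 : 0 ≤ c) (hc1 : c ≤ 1) :
    ν {x | cdf ν x ≤ c} = ENNReal.ofReal c := by
  set S := {x | cdf ν x ≤ c} with hSdef
  by_cases hne : S.Nonempty
  · by_cases hbdd : BddAbove S
    · set m := sSup S with hm
      have hgt : ∀ y, m < y → c < cdf ν y := by
        intro y hy
        by_contra h
        push_neg at h
        exact absurd (le_csSup hbdd h) (not_le.mpr hy)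
      have hlt : ∀ y, y < m → cdf ν y ≤ c := by
        intro y hy
        obtain ⟨s, hs, hys⟩ := exists_lt_of_lt_csSup hne hy
        exact (monotone_cdf ν hys.le).trans hs
      have hIio : ν (Iio m) ≤ ENNReal.ofReal c := by
        have hU : Iio m = ⋃ n : ℕ, Iic (m - ((n:ℝ)+1)⁻¹) := by
          ext x
          simp only [mem_Iio, mem_iUnion, mem_Iic]
          constructor
          · intro hx
            obtain ⟨n, hn⟩ := exists_nat_one_div_lt (sub_pos.mpr hx)
            exact ⟨n, by rw [one_div] at hn; linarith⟩
          · rintro ⟨n, hn⟩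
            have : (0:ℝ) < ((n:ℝ)+1)⁻¹ := by positivity
            linarith
        rw [hU, Directed.measure_iUnion]
        · refine iSup_le fun n => ?_
          rw [← ofReal_cdf]
          refine ENNReal.ofReal_le_ofReal (hlt _ ?_)
          have : (0:ℝ) < ((n:ℝ)+1)⁻¹ := by positivity
          linarith
        · refine (Monotone.directed_le fun i j hij => Iic_subset_Iic.mpr ?_)
          have hij' : (i:ℝ) ≤ (j:ℝ) := Nat.cast_le.mpr hij
          have : ((j:ℝ)+1)⁻¹ ≤ ((i:ℝ)+1)⁻¹ := by
            apply inv_anti₀ (by positivity) (by linarith)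
          linarith
      have hIic : ν (Iic m) = ν (Iio m) := by
        rw [← Iio_union_right]
        exact le_antisymm ((measure_union_le _ _).trans (by rw [hatom m, add_zero]))
          (measure_mono subset_union_left)
      have hcm_le : cdf ν m ≤ c := by
        have h1 : ENNReal.ofReal (cdf ν m) ≤ ENNReal.ofReal c := by
          rw [ofReal_cdf, hIic]; exact hIio
        exact (ENNReal.ofReal_le_ofReal_iff hc0).mp h1
      have hcm_ge : c ≤ cdf ν m := by
        have htend : Tendsto (cdf ν) (𝓝[>] m) (𝓝 (cdf ν m)) :=
          ((cdf ν).right_continuous m).tendsto.mono_left (nhdsWithin_mono m Ioi_subset_Ici_self)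
        refine ge_of_tendsto htend ?_
        filter_upwards [self_mem_nhdsWithin] with y hy
        exact (hgt y hy).le
      have hSeq : S = Iic m := by
        ext x
        constructor
        · intro hx; exact le_csSup hbdd hx
        · intro hx
          exact (monotone_cdf ν hx).trans hcm_le
      rw [hSeq, ← ofReal_cdf]
      congr 1
      linarith
    · have hSuniv : S = univ := by
        ext x
        simp only [mem_univ, iff_true]
        rw [not_bddAbove_iff] at hbdd
        obtain ⟨y, hy, hxy⟩ := hbdd x
        exact (monotone_cdf ν hxy.le).trans hy
      have h1 : (1:ℝ) ≤ c := by
        refine le_of_tendsto (tendsto_cdf_atTop ν) (Eventually.of_forall fun x => ?_)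
        have : x ∈ S := hSuniv ▸ mem_univ x
        exact this
      have : c = 1 := le_antisymm hc1 h1
      rw [hSuniv, this, measure_univ, ENNReal.ofReal_one]
  · have hgt : ∀ x, c < cdf ν x := by
      intro x
      by_contra h
      push_neg at h
      exact hne ⟨x, h⟩
    have hc0' : c ≤ 0 :=
      ge_of_tendsto (tendsto_cdf_atBot ν) (Eventually.of_forall fun x => (hgt x).le)
    rw [not_nonempty_iff_eq_empty.mp hne, measure_empty, le_antisymm hc0' hc0,
      ENNReal.ofReal_zero]

section Quant
variable (a b : ℝ) (ν : Measure ℝ) [IsProbabilityMeasure ν]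

/-- Quantile function of `ν` relative to the interval `[a,b]`. -/
noncomputable def quant (u : ℝ) : ℝ :=
  sInf ({y ∈ Set.Icc a b | u ≤ cdf ν y} ∪ {b})

variable {a b ν}

lemma quant_set_nonempty (u : ℝ) : ({y ∈ Set.Icc a b | u ≤ cdf ν y} ∪ {b}).Nonempty :=
  ⟨b, Or.inr rfl⟩

lemma quant_set_bddBelow (hab : a ≤ b) (u : ℝ) :
    BddBelow ({y ∈ Set.Icc a b | u ≤ cdf ν y} ∪ {b}) := by
  refine ⟨a, fun y hy => ?_⟩
  rcases hy with ⟨⟨h1, _⟩, _⟩ | h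
  · exact h1
  · simp only [mem_singleton_iff] at h; exact h ▸ hab

lemma quant_mem (hab : a ≤ b) (u : ℝ) : quant a b ν u ∈ Set.Icc a b := by
  constructor
  · refine le_csInf (quant_set_nonempty u) fun y hy => ?_
    rcases hy with ⟨⟨h1, _⟩, _⟩ | h
    · exact h1
    · simp only [mem_singleton_iff] at h; exact h ▸ hab
  · exact csInf_le (quant_set_bddBelow hab u) (Or.inr rfl)

lemma quant_mono (hab : a ≤ b) : Monotone (quant a b ν) := by
  intro u v huv
  refine csInf_le_csInf (quant_set_bddBelow hab u) (quant_set_nonempty v) ?_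
  rintro y (⟨hy1, hy2⟩ | hy)
  · exact Or.inl ⟨hy1, huv.trans hy2⟩
  · exact Or.inr hy

end Quant

section Supp
variable {a b : ℝ} {ν : Measure ℝ} [IsProbabilityMeasure ν]

lemma icc_full (hsupp : ν (Set.Icc a b)ᶜ = 0) : ν (Set.Icc a b) = 1 := by
  have h := measure_add_measure_compl (μ := ν) (measurableSet_Icc (a := a) (b := b))
  rw [hsupp, add_zero, measure_univ] at h
  exact h

lemma cdf_eq_one_at_b (hab : a ≤ b) (hsupp : ν (Set.Icc a b)ᶜ = 0) : cdf ν b = 1 := by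
  have h1 : ν (Iic b) = 1 := by
    refine le_antisymm prob_le_one ?_
    have hle : ν (Set.Icc a b) ≤ ν (Iic b) := measure_mono fun x hx => hx.2
    rw [← icc_full hsupp]; exact hle
  have h2 := ofReal_cdf ν b
  rw [h1] at h2
  exact ENNReal.ofReal_eq_one.mp h2

lemma cdf_eq_zero_below (hsupp : ν (Set.Icc a b)ᶜ = 0) {y : ℝ} (hy : y < a) : cdf ν y = 0 := by
  have h0 : ν (Iic y) = 0 := by
    refine measure_mono_null (fun x hx => ?_) hsupp
    simp only [mem_compl_iff, mem_Icc, not_and_or, not_le]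
    exact Or.inl (lt_of_le_of_lt hx hy)
  have := ofReal_cdf ν y
  rw [h0, ENNReal.ofReal_eq_zero] at this
  exact le_antisymm this (cdf_nonneg ν y)

lemma quant_le_iff (hab : a ≤ b) (hsupp : ν (Set.Icc a b)ᶜ = 0) {u : ℝ}
    (hu0 : 0 < u) (hu1 : u ≤ 1) (y : ℝ) :
    quant a b ν u ≤ y ↔ u ≤ cdf ν y := by
  have hmem : ∀ s ∈ ({z ∈ Set.Icc a b | u ≤ cdf ν z} ∪ {b}), u ≤ cdf ν s := by
    rintro s (⟨_, hs⟩ | hs)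
    · exact hs
    · simp only [mem_singleton_iff] at hs
      rw [hs, cdf_eq_one_at_b hab hsupp]; exact hu1
  have hq : u ≤ cdf ν (quant a b ν u) := by
    have hZ : ∀ z, quant a b ν u < z → u ≤ cdf ν z := by
      intro z hz
      obtain ⟨s, hs, hsz⟩ := exists_lt_of_csInf_lt (quant_set_nonempty u) hz
      exact (hmem s hs).trans (monotone_cdf ν hsz.le)
    have htend : Tendsto (cdf ν) (𝓝[>] (quant a b ν u)) (𝓝 (cdf ν (quant a b ν u))) :=
      ((cdf ν).right_continuous _).tendsto.mono_left (nhdsWithin_mono _ Ioi_subset_Ici_self)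
    refine ge_of_tendsto htend ?_
    filter_upwards [self_mem_nhdsWithin] with z hz
    exact hZ z hz
  constructor
  · intro h
    exact hq.trans (monotone_cdf ν h)
  · intro h
    rcases lt_or_ge y a with hya | hya
    · exact absurd h (by rw [cdf_eq_zero_below hsupp hya]; linarith)
    · rcases le_or_gt y b with hyb | hyb
      · exact csInf_le (quant_set_bddBelow hab u) (Or.inl ⟨⟨hya, hyb⟩, h⟩)
      · exact (quant_mem hab u).2.trans hyb.le

end Supp

section TransportMap
variable {a b : ℝ} {ν₀ ν₁ : Measure ℝ} [IsProbabilityMeasure ν₀] [IsProbabilityMeasure ν₁]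

lemma atoms_of_ac (hac : ν₀ ≪ volume) (x : ℝ) : ν₀ {x} = 0 :=
  hac (Real.volume_singleton)

lemma Tmono (hab : a ≤ b) : Monotone (fun x => quant a b ν₁ (cdf ν₀ x)) :=
  (quant_mono hab).comp (monotone_cdf ν₀)

lemma Tmeas (hab : a ≤ b) : Measurable (fun x => quant a b ν₁ (cdf ν₀ x)) :=
  (Tmono hab).measurable

lemma Tmaps (hab : a ≤ b) (x : ℝ) : quant a b ν₁ (cdf ν₀ x) ∈ Set.Icc a b :=
  quant_mem hab _

lemma map_T (hab : a ≤ b) (hν₁supp : ν₁ (Set.Icc a b)ᶜ = 0)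
    (hν₀ac : ν₀ ≪ volume) :
    ν₀.map (fun x => quant a b ν₁ (cdf ν₀ x)) = ν₁ := by
  have hT := Tmeas (ν₀ := ν₀) (ν₁ := ν₁) hab
  have : IsProbabilityMeasure (ν₀.map (fun x => quant a b ν₁ (cdf ν₀ x))) :=
    Measure.isProbabilityMeasure_map hT.aemeasurable
  refine Measure.ext_of_Iic _ _ (fun y => ?_)
  rw [Measure.map_apply hT measurableSet_Iic]
  have hpos : ∀ᵐ x ∂ν₀, 0 < cdf ν₀ x := by
    rw [ae_iff]
    have : {x | ¬ 0 < cdf ν₀ x} = {x | cdf ν₀ x ≤ 0} := by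
      ext x; simp [not_lt]
    rw [this, cdf_level ν₀ (atoms_of_ac hν₀ac) 0 le_rfl zero_le_one, ENNReal.ofReal_zero]
  have hsetseq : ((fun x => quant a b ν₁ (cdf ν₀ x)) ⁻¹' Iic y : Set ℝ)
      =ᵐ[ν₀] {x | cdf ν₀ x ≤ cdf ν₁ y} := by
    rw [eventuallyEq_set]
    filter_upwards [hpos] with x hx
    simp only [mem_preimage, mem_Iic, mem_setOf_eq]
    exact quant_le_iff hab hν₁supp hx (cdf_le_one ν₀ x) y
  rw [measure_congr hsetseq,
    cdf_level ν₀ (atoms_of_ac hν₀ac) _ (cdf_nonneg ν₁ y) (cdf_le_one ν₁ y), ofReal_cdf]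

end TransportMap

section Rays
variable {ν₀ ν₁ : Measure ℝ} [IsProbabilityMeasure ν₀] [IsProbabilityMeasure ν₁]

lemma plan_ray_le (γ : Measure (ℝ × ℝ)) (h0 : γ.map Prod.fst = ν₀) (h1 : γ.map Prod.snd = ν₁)
    (s t : ℝ) :
    γ (Set.Ioi s ×ˢ Set.Ioi t) ≤ min (ν₀ (Set.Ioi s)) (ν₁ (Set.Ioi t)) := by
  refine le_min ?_ ?_
  · rw [← h0, Measure.map_apply measurable_fst measurableSet_Ioi]
    exact measure_mono fun p hp => hp.1
  · rw [← h1, Measure.map_apply measurable_snd measurableSet_Ioi]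
    exact measure_mono fun p hp => hp.2

lemma mono_plan_ray {T : ℝ → ℝ} (hTmono : Monotone T) (hTmeas : Measurable T)
    (hmap : ν₀.map T = ν₁) (s t : ℝ) :
    (ν₀.map (fun x => (x, T x))) (Set.Ioi s ×ˢ Set.Ioi t)
      = min (ν₀ (Set.Ioi s)) (ν₁ (Set.Ioi t)) := by
  have hmeas : Measurable (fun x => (x, T x)) := measurable_id.prodMk hTmeas
  rw [Measure.map_apply hmeas (measurableSet_Ioi.prod measurableSet_Ioi)]
  have hpre : (fun x => (x, T x)) ⁻¹' (Set.Ioi s ×ˢ Set.Ioi t)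
      = Set.Ioi s ∩ T ⁻¹' Set.Ioi t := rfl
  rw [hpre]
  have hU : ν₀ (T ⁻¹' Set.Ioi t) = ν₁ (Set.Ioi t) := by
    rw [← hmap, Measure.map_apply hTmeas measurableSet_Ioi]
  by_cases hss : Set.Ioi s ⊆ T ⁻¹' Set.Ioi t
  · rw [Set.inter_eq_left.mpr hss, min_eq_left]
    rw [← hU]
    exact measure_mono hss
  · obtain ⟨v, hv, hvn⟩ := Set.not_subset.mp hss
    have hsub : T ⁻¹' Set.Ioi t ⊆ Set.Ioi s := by
      intro u hu
      rcases le_or_gt u v with h | h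
      · exact absurd (lt_of_lt_of_le hu (hTmono h)) (by simpa using hvn)
      · exact lt_trans hv h
    rw [Set.inter_eq_right.mpr hsub, hU, min_eq_right]
    rw [← hU]
    exact measure_mono hsub
end Rays

section LayerCake

lemma layercake (a : ℝ) (γ : Measure (ℝ × ℝ)) [IsFiniteMeasure γ]
    (hsupp : ∀ᵐ p ∂γ, a ≤ p.1 ∧ a ≤ p.2) :
    ∫⁻ p, ENNReal.ofReal ((p.1 - a) * (p.2 - a)) ∂γ
      = ∫⁻ q in Set.Ici a ×ˢ Set.Ici a, γ (Set.Ioi q.1 ×ˢ Set.Ioi q.2) ∂(volume : Measure (ℝ × ℝ)) := by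
  have hD : MeasurableSet {r : (ℝ × ℝ) × (ℝ × ℝ) | r.2 ∈ Set.Ico a r.1.1 ×ˢ Set.Ico a r.1.2} := by
    have h1 : MeasurableSet {r : (ℝ × ℝ) × (ℝ × ℝ) | a ≤ r.2.1} :=
      measurableSet_le measurable_const (measurable_fst.comp measurable_snd)
    have h2 : MeasurableSet {r : (ℝ × ℝ) × (ℝ × ℝ) | r.2.1 < r.1.1} :=
      measurableSet_lt (measurable_fst.comp measurable_snd) (measurable_fst.comp measurable_fst)
    have h3 : MeasurableSet {r : (ℝ × ℝ) × (ℝ × ℝ) | a ≤ r.2.2} :=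
      measurableSet_le measurable_const (measurable_snd.comp measurable_snd)
    have h4 : MeasurableSet {r : (ℝ × ℝ) × (ℝ × ℝ) | r.2.2 < r.1.2} :=
      measurableSet_lt (measurable_snd.comp measurable_snd) (measurable_snd.comp measurable_fst)
    have : {r : (ℝ × ℝ) × (ℝ × ℝ) | r.2 ∈ Set.Ico a r.1.1 ×ˢ Set.Ico a r.1.2}
        = ({r | a ≤ r.2.1} ∩ {r | r.2.1 < r.1.1}) ∩ ({r | a ≤ r.2.2} ∩ {r | r.2.2 < r.1.2}) := by
      ext r
      simp only [Set.mem_prod, Set.mem_Ico, Set.mem_setOf_eq, Set.mem_inter_iff]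
    exact this ▸ ((h1.inter h2).inter (h3.inter h4))
  -- Step 1: rewrite integrand as measure of a rectangle
  have step1 : ∫⁻ p, ENNReal.ofReal ((p.1 - a) * (p.2 - a)) ∂γ
      = ∫⁻ p, (∫⁻ q, ({r : (ℝ × ℝ) × (ℝ × ℝ) | r.2 ∈ Set.Ico a r.1.1 ×ˢ Set.Ico a r.1.2}.indicator
          (1 : (ℝ × ℝ) × (ℝ × ℝ) → ℝ≥0∞) (p, q)) ∂(volume : Measure (ℝ × ℝ))) ∂γ := by
    refine lintegral_congr_ae ?_
    filter_upwards [hsupp] with p hp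
    have hind : ∀ q, ({r : (ℝ × ℝ) × (ℝ × ℝ) | r.2 ∈ Set.Ico a r.1.1 ×ˢ Set.Ico a r.1.2}.indicator
        (1 : (ℝ × ℝ) × (ℝ × ℝ) → ℝ≥0∞) (p, q)) = (Set.Ico a p.1 ×ˢ Set.Ico a p.2).indicator
          (1 : (ℝ × ℝ) → ℝ≥0∞) q := by
      intro q
      by_cases h : q ∈ Set.Ico a p.1 ×ˢ Set.Ico a p.2
      · rw [Set.indicator_of_mem h, Set.indicator_of_mem (show (p, q) ∈ _ from h)]
        rfl
      · rw [Set.indicator_of_notMem h, Set.indicator_of_notMem (show (p, q) ∉ _ from h)]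
    simp only [hind]
    rw [lintegral_indicator_one ((measurableSet_Ico).prod (measurableSet_Ico))]
    rw [Measure.volume_eq_prod, Measure.prod_prod, Real.volume_Ico, Real.volume_Ico,
      ← ENNReal.ofReal_mul (by linarith [hp.1])]
  rw [step1]
  -- Step 2: swap
  rw [lintegral_lintegral_swap]
  · -- Step 3: compute inner integral
    have step3 : ∀ q : ℝ × ℝ,
        ∫⁻ p, ({r : (ℝ × ℝ) × (ℝ × ℝ) | r.2 ∈ Set.Ico a r.1.1 ×ˢ Set.Ico a r.1.2}.indicator
          (1 : (ℝ × ℝ) × (ℝ × ℝ) → ℝ≥0∞) (p, q)) ∂γ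
        = (Set.Ici a ×ˢ Set.Ici a).indicator (fun q => γ (Set.Ioi q.1 ×ˢ Set.Ioi q.2)) q := by
      intro q
      by_cases hq : q ∈ Set.Ici a ×ˢ Set.Ici a
      · have hind : ∀ p : ℝ × ℝ,
            ({r : (ℝ × ℝ) × (ℝ × ℝ) | r.2 ∈ Set.Ico a r.1.1 ×ˢ Set.Ico a r.1.2}.indicator
              (1 : (ℝ × ℝ) × (ℝ × ℝ) → ℝ≥0∞) (p, q)) = (Set.Ioi q.1 ×ˢ Set.Ioi q.2).indicator
                (1 : (ℝ × ℝ) → ℝ≥0∞) p := by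
          intro p
          have hiff : (p, q) ∈ {r : (ℝ × ℝ) × (ℝ × ℝ) | r.2 ∈ Set.Ico a r.1.1 ×ˢ Set.Ico a r.1.2}
              ↔ p ∈ Set.Ioi q.1 ×ˢ Set.Ioi q.2 := by
            simp only [Set.mem_setOf_eq, Set.mem_prod, Set.mem_Ico, Set.mem_Ioi]
            constructor
            · rintro ⟨⟨_, h1⟩, ⟨_, h2⟩⟩; exact ⟨h1, h2⟩
            · rintro ⟨h1, h2⟩; exact ⟨⟨hq.1, h1⟩, ⟨hq.2, h2⟩⟩
          by_cases h : p ∈ Set.Ioi q.1 ×ˢ Set.Ioi q.2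
          · rw [Set.indicator_of_mem (hiff.mpr h), Set.indicator_of_mem h]
            rfl
          · rw [Set.indicator_of_notMem (fun hc => h (hiff.mp hc)),
              Set.indicator_of_notMem h]
        simp only [hind]
        rw [lintegral_indicator_one (measurableSet_Ioi.prod measurableSet_Ioi),
          Set.indicator_of_mem hq]
      · have hind : ∀ p : ℝ × ℝ,
            ({r : (ℝ × ℝ) × (ℝ × ℝ) | r.2 ∈ Set.Ico a r.1.1 ×ˢ Set.Ico a r.1.2}.indicator
              (1 : (ℝ × ℝ) × (ℝ × ℝ) → ℝ≥0∞) (p, q)) = 0 := by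
          intro p
          exact Set.indicator_of_notMem (fun hc => hq ⟨hc.1.1, hc.2.1⟩) _
        simp only [hind]
        rw [lintegral_zero, Set.indicator_of_notMem hq]
    simp only [step3]
    rw [lintegral_indicator (measurableSet_Ici.prod measurableSet_Ici)]
  · exact (measurable_one.indicator hD).aemeasurable

end LayerCake

section Ext

lemma ray_tendsto (γ : Measure (ℝ × ℝ)) (s t : ℝ) :
    Tendsto (fun n : ℕ => γ (Set.Ioi (s + ((n:ℝ)+1)⁻¹) ×ˢ Set.Ioi (t + ((n:ℝ)+1)⁻¹))) atTop
      (𝓝 (γ (Set.Ioi s ×ˢ Set.Ioi t))) := by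
  have hmono : Monotone (fun n : ℕ => Set.Ioi (s + ((n:ℝ)+1)⁻¹) ×ˢ Set.Ioi (t + ((n:ℝ)+1)⁻¹)) := by
    intro i j hij
    have hij' : (i:ℝ) ≤ (j:ℝ) := Nat.cast_le.mpr hij
    have hinv : ((j:ℝ)+1)⁻¹ ≤ ((i:ℝ)+1)⁻¹ := inv_anti₀ (by positivity) (by linarith)
    exact Set.prod_mono (Set.Ioi_subset_Ioi (by linarith)) (Set.Ioi_subset_Ioi (by linarith))
  have hU : (⋃ n : ℕ, Set.Ioi (s + ((n:ℝ)+1)⁻¹) ×ˢ Set.Ioi (t + ((n:ℝ)+1)⁻¹))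
      = Set.Ioi s ×ˢ Set.Ioi t := by
    ext p
    simp only [Set.mem_iUnion, Set.mem_prod, Set.mem_Ioi]
    constructor
    · rintro ⟨n, h1, h2⟩
      have : (0:ℝ) < ((n:ℝ)+1)⁻¹ := by positivity
      exact ⟨by linarith, by linarith⟩
    · rintro ⟨h1, h2⟩
      obtain ⟨n, hn⟩ := exists_nat_one_div_lt (lt_min (sub_pos.mpr h1) (sub_pos.mpr h2))
      rw [one_div] at hn
      rcases lt_min_iff.mp hn with ⟨ha1, ha2⟩
      exact ⟨n, by linarith, by linarith⟩
  have := tendsto_measure_iUnion_atTop (μ := γ) hmono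
  rwa [hU] at this

lemma ray_reduce (a : ℝ) {ν₀ ν₁ : Measure ℝ} (γ : Measure (ℝ × ℝ))
    (h0 : γ.map Prod.fst = ν₀) (h1 : γ.map Prod.snd = ν₁)
    (h0a : ν₀ (Set.Iio a ∪ {a}) = 0) (h1a : ν₁ (Set.Iio a ∪ {a}) = 0) (s t : ℝ) :
    γ (Set.Ioi s ×ˢ Set.Ioi t) = γ (Set.Ioi (max s a) ×ˢ Set.Ioi (max t a)) := by
  have key : ∀ u v : ℝ, γ ((Set.Ioi u \ Set.Ioi (max u a)) ×ˢ Set.Ioi v) = 0 := by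
    intro u v
    have hsub : (Set.Ioi u \ Set.Ioi (max u a)) ×ˢ Set.Ioi v
        ⊆ Prod.fst ⁻¹' (Set.Iio a ∪ {a}) := by
      rintro ⟨x, y⟩ ⟨⟨hx1, hx2⟩, _⟩
      simp only [Set.mem_Ioi, not_lt] at hx2
      rcases le_or_gt a u with hau | hau
      · rw [max_eq_left hau] at hx2
        exact absurd hx1 (not_lt.mpr hx2)
      · rw [max_eq_right hau.le] at hx2
        rcases lt_or_eq_of_le hx2 with h | h
        · exact Or.inl h
        · exact Or.inr h
    refine measure_mono_null hsub ?_
    rw [← h0] at h0a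
    rwa [Measure.map_apply measurable_fst (measurableSet_Iio.union (measurableSet_singleton a))]
      at h0a
  have key2 : ∀ u v : ℝ, γ (Set.Ioi u ×ˢ (Set.Ioi v \ Set.Ioi (max v a))) = 0 := by
    intro u v
    have hsub : Set.Ioi u ×ˢ (Set.Ioi v \ Set.Ioi (max v a))
        ⊆ Prod.snd ⁻¹' (Set.Iio a ∪ {a}) := by
      rintro ⟨x, y⟩ ⟨_, ⟨hy1, hy2⟩⟩
      simp only [Set.mem_Ioi, not_lt] at hy2
      rcases le_or_gt a v with hav | hav
      · rw [max_eq_left hav] at hy2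
        exact absurd hy1 (not_lt.mpr hy2)
      · rw [max_eq_right hav.le] at hy2
        rcases lt_or_eq_of_le hy2 with h | h
        · exact Or.inl h
        · exact Or.inr h
    refine measure_mono_null hsub ?_
    rw [← h1] at h1a
    rwa [Measure.map_apply measurable_snd (measurableSet_Iio.union (measurableSet_singleton a))]
      at h1a
  have step1 : γ (Set.Ioi s ×ˢ Set.Ioi t) = γ (Set.Ioi (max s a) ×ˢ Set.Ioi t) := by
    refine le_antisymm ?_ (measure_mono (Set.prod_mono (Set.Ioi_subset_Ioi (le_max_left s a))
      subset_rfl))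
    calc γ (Set.Ioi s ×ˢ Set.Ioi t)
        ≤ γ ((Set.Ioi (max s a) ×ˢ Set.Ioi t) ∪ ((Set.Ioi s \ Set.Ioi (max s a)) ×ˢ Set.Ioi t)) := by
          refine measure_mono ?_
          rintro ⟨x, y⟩ ⟨hx, hy⟩
          by_cases h : x ∈ Set.Ioi (max s a)
          · exact Or.inl ⟨h, hy⟩
          · exact Or.inr ⟨⟨hx, h⟩, hy⟩
      _ ≤ γ (Set.Ioi (max s a) ×ˢ Set.Ioi t) + γ ((Set.Ioi s \ Set.Ioi (max s a)) ×ˢ Set.Ioi t) :=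
          measure_union_le _ _
      _ = γ (Set.Ioi (max s a) ×ˢ Set.Ioi t) := by rw [key s t, add_zero]
  have step2 : γ (Set.Ioi (max s a) ×ˢ Set.Ioi t)
      = γ (Set.Ioi (max s a) ×ˢ Set.Ioi (max t a)) := by
    refine le_antisymm ?_ (measure_mono (Set.prod_mono subset_rfl
      (Set.Ioi_subset_Ioi (le_max_left t a))))
    calc γ (Set.Ioi (max s a) ×ˢ Set.Ioi t)
        ≤ γ ((Set.Ioi (max s a) ×ˢ Set.Ioi (max t a))
            ∪ (Set.Ioi (max s a) ×ˢ (Set.Ioi t \ Set.Ioi (max t a)))) := by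
          refine measure_mono ?_
          rintro ⟨x, y⟩ ⟨hx, hy⟩
          by_cases h : y ∈ Set.Ioi (max t a)
          · exact Or.inl ⟨hx, h⟩
          · exact Or.inr ⟨hx, ⟨hy, h⟩⟩
      _ ≤ γ (Set.Ioi (max s a) ×ˢ Set.Ioi (max t a))
            + γ (Set.Ioi (max s a) ×ˢ (Set.Ioi t \ Set.Ioi (max t a))) := measure_union_le _ _
      _ = γ (Set.Ioi (max s a) ×ˢ Set.Ioi (max t a)) := by rw [key2 _ t, add_zero]
  rw [step1, step2]

lemma ext_of_rays (γ γ' : Measure (ℝ × ℝ)) [IsProbabilityMeasure γ] [IsProbabilityMeasure γ']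
    (h : ∀ s t : ℝ, γ (Set.Ioi s ×ˢ Set.Ioi t) = γ' (Set.Ioi s ×ˢ Set.Ioi t)) : γ = γ' := by
  have hspan : IsCountablySpanning (Set.range (Set.Ioi : ℝ → Set ℝ)) := by
    refine ⟨fun n => Set.Ioi (-(n:ℝ)), fun n => ⟨-(n:ℝ), rfl⟩, ?_⟩
    ext x
    simp only [Set.mem_iUnion, Set.mem_Ioi, Set.mem_univ, iff_true]
    obtain ⟨n, hn⟩ := exists_nat_gt (-x)
    exact ⟨n, by linarith⟩
  have hreal : (inferInstance : MeasurableSpace ℝ)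
      = MeasurableSpace.generateFrom (Set.range (Set.Ioi : ℝ → Set ℝ)) := by
    rw [BorelSpace.measurable_eq (α := ℝ), borel_eq_generateFrom_Ioi]
  have hgen : (inferInstance : MeasurableSpace (ℝ × ℝ)) = MeasurableSpace.generateFrom
      (Set.image2 (· ×ˢ ·) (Set.range (Set.Ioi : ℝ → Set ℝ)) (Set.range (Set.Ioi : ℝ → Set ℝ))) := by
    rw [← generateFrom_prod_eq hspan hspan]
    show @Prod.instMeasurableSpace ℝ ℝ _ _ = _
    rw [← hreal]
  have hpi : IsPiSystem
      (Set.image2 (· ×ˢ ·) (Set.range (Set.Ioi : ℝ → Set ℝ)) (Set.range (Set.Ioi : ℝ → Set ℝ))) := by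
    refine IsPiSystem.prod ?_ ?_ <;>
    · rintro _ ⟨u, rfl⟩ _ ⟨v, rfl⟩ _
      exact ⟨max u v, (Set.Ioi_inter_Ioi).symm⟩
  refine MeasureTheory.ext_of_generate_finite _ hgen hpi ?_ ?_
  · rintro _ ⟨_, ⟨u, rfl⟩, _, ⟨v, rfl⟩, rfl⟩
    exact h u v
  · simp [measure_univ]
end Ext

section Cost
variable {a b : ℝ} {ν₀ ν₁ : Measure ℝ} [IsProbabilityMeasure ν₀] [IsProbabilityMeasure ν₁]

lemma plan_prob (γ : Measure (ℝ × ℝ)) (h0 : γ.map Prod.fst = ν₀) : IsProbabilityMeasure γ := by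
  constructor
  have h := congrArg (fun m : Measure ℝ => m Set.univ) h0
  simp only [Measure.map_apply measurable_fst MeasurableSet.univ, Set.preimage_univ,
    measure_univ] at h
  exact h

lemma plan_ae_box (hν₀supp : ν₀ (Set.Icc a b)ᶜ = 0) (hν₁supp : ν₁ (Set.Icc a b)ᶜ = 0)
    (γ : Measure (ℝ × ℝ)) (h0 : γ.map Prod.fst = ν₀) (h1 : γ.map Prod.snd = ν₁) :
    ∀ᵐ p ∂γ, p.1 ∈ Set.Icc a b ∧ p.2 ∈ Set.Icc a b := by
  rw [ae_iff]
  have hsub : {p : ℝ × ℝ | ¬(p.1 ∈ Set.Icc a b ∧ p.2 ∈ Set.Icc a b)}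
      ⊆ (Prod.fst ⁻¹' (Set.Icc a b)ᶜ) ∪ (Prod.snd ⁻¹' (Set.Icc a b)ᶜ) := by
    intro p hp
    rw [Set.mem_setOf_eq, not_and_or] at hp
    exact hp.imp (fun h => h) (fun h => h)
  refine measure_mono_null hsub (measure_union_null ?_ ?_)
  · rw [← Measure.map_apply measurable_fst measurableSet_Icc.compl, h0]
    exact hν₀supp
  · rw [← Measure.map_apply measurable_snd measurableSet_Icc.compl, h1]
    exact hν₁supp

lemma lint_fin (hab : a ≤ b) (γ : Measure (ℝ × ℝ)) [IsProbabilityMeasure γ]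
    (hbox : ∀ᵐ p ∂γ, p.1 ∈ Set.Icc a b ∧ p.2 ∈ Set.Icc a b) :
    ∫⁻ p, ENNReal.ofReal ((p.1 - a) * (p.2 - a)) ∂γ ≤ ENNReal.ofReal ((b - a)^2) := by
  calc ∫⁻ p, ENNReal.ofReal ((p.1 - a) * (p.2 - a)) ∂γ
      ≤ ∫⁻ _, ENNReal.ofReal ((b - a)^2) ∂γ := by
        refine lintegral_mono_ae ?_
        filter_upwards [hbox] with p hp
        refine ENNReal.ofReal_le_ofReal ?_
        rcases hp with ⟨⟨h1, h2⟩, ⟨h3, h4⟩⟩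
        nlinarith
    _ = ENNReal.ofReal ((b - a)^2) := by rw [lintegral_const, measure_univ, mul_one]

lemma cost_decomp (hab : a ≤ b) (hν₀supp : ν₀ (Set.Icc a b)ᶜ = 0)
    (hν₁supp : ν₁ (Set.Icc a b)ᶜ = 0)
    (γ : Measure (ℝ × ℝ)) (h0 : γ.map Prod.fst = ν₀) (h1 : γ.map Prod.snd = ν₁) :
    ∫ p : ℝ × ℝ, (p.1 - p.2)^2 ∂γ
      = (∫ x, (x - a)^2 ∂ν₀) + (∫ y, (y - a)^2 ∂ν₁)
        - 2 * (∫⁻ p, ENNReal.ofReal ((p.1 - a) * (p.2 - a)) ∂γ).toReal := by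
  haveI : IsProbabilityMeasure γ := plan_prob γ h0
  have hbox := plan_ae_box hν₀supp hν₁supp γ h0 h1
  have hc1 : Continuous (fun p : ℝ × ℝ => (p.1 - a)^2) := by fun_prop
  have hc2 : Continuous (fun p : ℝ × ℝ => (p.2 - a)^2) := by fun_prop
  have hcg : Continuous (fun p : ℝ × ℝ => (p.1 - a) * (p.2 - a)) := by fun_prop
  have hbound : ∀ x, x ∈ Set.Icc a b → (x - a)^2 ≤ (b - a)^2 := by
    intro x ⟨h1, h2⟩; nlinarith
  have hint1 : Integrable (fun p : ℝ × ℝ => (p.1 - a)^2) γ := by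
    refine (integrable_const ((b-a)^2)).mono' hc1.aestronglyMeasurable ?_
    filter_upwards [hbox] with p hp
    rw [Real.norm_eq_abs, abs_of_nonneg (sq_nonneg _)]
    exact hbound _ hp.1
  have hint2 : Integrable (fun p : ℝ × ℝ => (p.2 - a)^2) γ := by
    refine (integrable_const ((b-a)^2)).mono' hc2.aestronglyMeasurable ?_
    filter_upwards [hbox] with p hp
    rw [Real.norm_eq_abs, abs_of_nonneg (sq_nonneg _)]
    exact hbound _ hp.2
  have hintg : Integrable (fun p : ℝ × ℝ => (p.1 - a) * (p.2 - a)) γ := by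
    refine (integrable_const ((b-a)^2)).mono' hcg.aestronglyMeasurable ?_
    filter_upwards [hbox] with p hp
    rcases hp with ⟨⟨h1, h2⟩, ⟨h3, h4⟩⟩
    rw [Real.norm_eq_abs, abs_of_nonneg (mul_nonneg (by linarith) (by linarith))]
    nlinarith
  have hdecomp : (fun p : ℝ × ℝ => (p.1 - p.2)^2)
      = fun p : ℝ × ℝ => (p.1 - a)^2 + (p.2 - a)^2 - 2 * ((p.1 - a) * (p.2 - a)) := by
    funext p; ring
  have hIadd : Integrable (fun p : ℝ × ℝ => (p.1 - a)^2 + (p.2 - a)^2) γ := by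
    exact hint1.add hint2
  have hI2g : Integrable (fun p : ℝ × ℝ => 2 * ((p.1 - a) * (p.2 - a))) γ := by
    exact hintg.const_mul 2
  have hsub : ∫ p : ℝ × ℝ, ((p.1 - a)^2 + (p.2 - a)^2) - 2 * ((p.1 - a) * (p.2 - a)) ∂γ
      = (∫ p : ℝ × ℝ, ((p.1 - a)^2 + (p.2 - a)^2) ∂γ)
        - ∫ p : ℝ × ℝ, 2 * ((p.1 - a) * (p.2 - a)) ∂γ := integral_sub hIadd hI2g
  have hadd : ∫ p : ℝ × ℝ, ((p.1 - a)^2 + (p.2 - a)^2) ∂γ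
      = (∫ p : ℝ × ℝ, (p.1 - a)^2 ∂γ) + ∫ p : ℝ × ℝ, (p.2 - a)^2 ∂γ := integral_add hint1 hint2
  have hmul : ∫ p : ℝ × ℝ, 2 * ((p.1 - a) * (p.2 - a)) ∂γ
      = 2 * ∫ p : ℝ × ℝ, (p.1 - a) * (p.2 - a) ∂γ := integral_const_mul 2 _
  rw [hdecomp, hsub, hadd, hmul]
  have e1 : ∫ p : ℝ × ℝ, (p.1 - a)^2 ∂γ = ∫ x, (x - a)^2 ∂ν₀ := by
    rw [← h0, integral_map measurable_fst.aemeasurable]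
    exact (Continuous.aestronglyMeasurable (by fun_prop))
  have e2 : ∫ p : ℝ × ℝ, (p.2 - a)^2 ∂γ = ∫ y, (y - a)^2 ∂ν₁ := by
    rw [← h1, integral_map measurable_snd.aemeasurable]
    exact (Continuous.aestronglyMeasurable (by fun_prop))
  have e3 : ∫ p : ℝ × ℝ, (p.1 - a) * (p.2 - a) ∂γ
      = (∫⁻ p, ENNReal.ofReal ((p.1 - a) * (p.2 - a)) ∂γ).toReal := by
    rw [integral_eq_lintegral_of_nonneg_ae ?_ hcg.aestronglyMeasurable]
    · filter_upwards [hbox] with p hp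
      rcases hp with ⟨⟨h1, _⟩, ⟨h3, _⟩⟩
      exact mul_nonneg (by linarith) (by linarith)
  rw [e1, e2, e3]

end Cost


/-- One-dimensional Brenier-type theorem: for absolutely continuous probability
measures on a compact interval and the quadratic cost, there is a unique optimal
plan and it is induced by a Borel map. -/
theorem stmt_18 (a b : ℝ) (hab : a ≤ b)
    (ν₀ ν₁ : Measure ℝ) [IsProbabilityMeasure ν₀] [IsProbabilityMeasure ν₁]
    (hν₀supp : ν₀ (Set.Icc a b)ᶜ = 0) (hν₁supp : ν₁ (Set.Icc a b)ᶜ = 0)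
    (hν₀ac : ν₀ ≪ volume) (hν₁ac : ν₁ ≪ volume) :
    ∃ γ : Measure (ℝ × ℝ),
      (γ.map Prod.fst = ν₀ ∧ γ.map Prod.snd = ν₁) ∧
      (∀ γ' : Measure (ℝ × ℝ), γ'.map Prod.fst = ν₀ → γ'.map Prod.snd = ν₁ →
        ∫ p : ℝ × ℝ, (p.1 - p.2)^2 ∂γ ≤ ∫ p : ℝ × ℝ, (p.1 - p.2)^2 ∂γ') ∧
      (∃ T : ℝ → ℝ, Measurable T ∧ (∀ x ∈ Set.Icc a b, T x ∈ Set.Icc a b) ∧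
        γ = ν₀.map (fun x => (x, T x))) ∧
      (∀ γ' : Measure (ℝ × ℝ), γ'.map Prod.fst = ν₀ → γ'.map Prod.snd = ν₁ →
        (∀ γ'' : Measure (ℝ × ℝ), γ''.map Prod.fst = ν₀ → γ''.map Prod.snd = ν₁ →
          ∫ p : ℝ × ℝ, (p.1 - p.2)^2 ∂γ' ≤ ∫ p : ℝ × ℝ, (p.1 - p.2)^2 ∂γ'') →
        γ' = γ) := by
  classical
  set T : ℝ → ℝ := fun x => quant a b ν₁ (cdf ν₀ x) with hTdef
  have hTmeas : Measurable T := Tmeas hab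
  have hTmono : Monotone T := Tmono hab
  have hmapT : ν₀.map T = ν₁ := map_T hab hν₁supp hν₀ac
  set M : Measure (ℝ × ℝ) := ν₀.map (fun x => (x, T x)) with hMdef
  have hmeaspair : Measurable fun x : ℝ => (x, T x) := measurable_id.prodMk hTmeas
  have hM0 : M.map Prod.fst = ν₀ := by
    rw [hMdef, Measure.map_map measurable_fst hmeaspair]
    have h : (Prod.fst ∘ fun x : ℝ => (x, T x)) = id := rfl
    rw [h, Measure.map_id]
  have hM1 : M.map Prod.snd = ν₁ := by
    rw [hMdef, Measure.map_map measurable_snd hmeaspair]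
    exact hmapT
  haveI : IsProbabilityMeasure M := plan_prob M hM0
  have hbM := plan_ae_box hν₀supp hν₁supp M hM0 hM1
  have hMray : ∀ s t : ℝ, M (Set.Ioi s ×ˢ Set.Ioi t) = min (ν₀ (Set.Ioi s)) (ν₁ (Set.Ioi t)) :=
    fun s t => mono_plan_ray hTmono hTmeas hmapT s t
  have hLM_fin : (∫⁻ p, ENNReal.ofReal ((p.1 - a) * (p.2 - a)) ∂M) ≠ ⊤ :=
    ((lint_fin hab M hbM).trans_lt ENNReal.ofReal_lt_top).ne
  have hLle : ∀ γ' : Measure (ℝ × ℝ), γ'.map Prod.fst = ν₀ → γ'.map Prod.snd = ν₁ →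
      (∫⁻ p, ENNReal.ofReal ((p.1 - a) * (p.2 - a)) ∂γ')
        ≤ ∫⁻ p, ENNReal.ofReal ((p.1 - a) * (p.2 - a)) ∂M := by
    intro γ' h0 h1
    haveI := plan_prob (ν₀ := ν₀) γ' h0
    have hb' := plan_ae_box hν₀supp hν₁supp γ' h0 h1
    rw [layercake a γ' (hb'.mono fun p hp => ⟨hp.1.1, hp.2.1⟩),
        layercake a M (hbM.mono fun p hp => ⟨hp.1.1, hp.2.1⟩)]
    refine lintegral_mono fun q => ?_
    rw [hMray q.1 q.2]
    exact plan_ray_le γ' h0 h1 q.1 q.2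
  have hopt : ∀ γ' : Measure (ℝ × ℝ), γ'.map Prod.fst = ν₀ → γ'.map Prod.snd = ν₁ →
      ∫ p : ℝ × ℝ, (p.1 - p.2)^2 ∂M ≤ ∫ p : ℝ × ℝ, (p.1 - p.2)^2 ∂γ' := by
    intro γ' h0 h1
    rw [cost_decomp hab hν₀supp hν₁supp M hM0 hM1,
      cost_decomp hab hν₀supp hν₁supp γ' h0 h1]
    have h := ENNReal.toReal_mono hLM_fin (hLle γ' h0 h1)
    linarith
  refine ⟨M, ⟨hM0, hM1⟩, hopt, ⟨T, hTmeas, fun x _ => Tmaps hab x, hMdef⟩, ?_⟩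
  -- uniqueness
  intro γ' h0 h1 hopt'
  haveI := plan_prob (ν₀ := ν₀) γ' h0
  have hb' := plan_ae_box hν₀supp hν₁supp γ' h0 h1
  have hcosteq : ∫ p : ℝ × ℝ, (p.1 - p.2)^2 ∂γ' = ∫ p : ℝ × ℝ, (p.1 - p.2)^2 ∂M :=
    le_antisymm (hopt' M hM0 hM1) (hopt γ' h0 h1)
  have hLγ_fin : (∫⁻ p, ENNReal.ofReal ((p.1 - a) * (p.2 - a)) ∂γ') ≠ ⊤ :=
    ((hLle γ' h0 h1).trans_lt (lt_top_iff_ne_top.mpr hLM_fin)).ne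
  have hLeq : (∫⁻ p, ENNReal.ofReal ((p.1 - a) * (p.2 - a)) ∂γ')
      = ∫⁻ p, ENNReal.ofReal ((p.1 - a) * (p.2 - a)) ∂M := by
    have hc1 := cost_decomp hab hν₀supp hν₁supp γ' h0 h1
    have hc2 := cost_decomp hab hν₀supp hν₁supp M hM0 hM1
    have h2 : (∫⁻ p, ENNReal.ofReal ((p.1 - a) * (p.2 - a)) ∂γ').toReal
        = (∫⁻ p, ENNReal.ofReal ((p.1 - a) * (p.2 - a)) ∂M).toReal := by
      rw [hc1, hc2] at hcosteq
      linarith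
    exact (ENNReal.toReal_eq_toReal_iff' hLγ_fin hLM_fin).mp h2
  have hint_eq : ∫⁻ q in Set.Ici a ×ˢ Set.Ici a, γ' (Set.Ioi q.1 ×ˢ Set.Ioi q.2) ∂volume
      = ∫⁻ q in Set.Ici a ×ˢ Set.Ici a, M (Set.Ioi q.1 ×ˢ Set.Ioi q.2) ∂volume := by
    rw [← layercake a γ' (hb'.mono fun p hp => ⟨hp.1.1, hp.2.1⟩),
        ← layercake a M (hbM.mono fun p hp => ⟨hp.1.1, hp.2.1⟩)]
    exact hLeq
  have hfin' : (∫⁻ q in Set.Ici a ×ˢ Set.Ici a, γ' (Set.Ioi q.1 ×ˢ Set.Ioi q.2) ∂volume) ≠ ⊤ := by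
    rw [← layercake a γ' (hb'.mono fun p hp => ⟨hp.1.1, hp.2.1⟩)]
    exact hLγ_fin
  have hgmeas : Measurable (fun q : ℝ × ℝ => M (Set.Ioi q.1 ×ˢ Set.Ioi q.2)) := by
    have h : (fun q : ℝ × ℝ => M (Set.Ioi q.1 ×ˢ Set.Ioi q.2))
        = fun q => min (ν₀ (Set.Ioi q.1)) (ν₁ (Set.Ioi q.2)) := by
      funext q; exact hMray q.1 q.2
    rw [h]
    have m1 : Measurable fun s : ℝ => ν₀ (Set.Ioi s) :=
      Antitone.measurable (fun u v huv => measure_mono (Set.Ioi_subset_Ioi huv))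
    have m2 : Measurable fun t : ℝ => ν₁ (Set.Ioi t) :=
      Antitone.measurable (fun u v huv => measure_mono (Set.Ioi_subset_Ioi huv))
    exact (m1.comp measurable_fst).min (m2.comp measurable_snd)
  have hae : (fun q : ℝ × ℝ => γ' (Set.Ioi q.1 ×ˢ Set.Ioi q.2))
      =ᵐ[volume.restrict (Set.Ici a ×ˢ Set.Ici a)]
        (fun q => M (Set.Ioi q.1 ×ˢ Set.Ioi q.2)) := by
    refine ae_eq_of_ae_le_of_lintegral_le (ae_of_all _ fun q => ?_) hfin'
      hgmeas.aemeasurable (le_of_eq hint_eq.symm)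
    show γ' (Set.Ioi q.1 ×ˢ Set.Ioi q.2) ≤ M (Set.Ioi q.1 ×ˢ Set.Ioi q.2)
    rw [hMray q.1 q.2]
    exact plan_ray_le γ' h0 h1 q.1 q.2
  have haeR : ∀ᵐ q : ℝ × ℝ ∂volume, q ∈ Set.Ici a ×ˢ Set.Ici a →
      γ' (Set.Ioi q.1 ×ˢ Set.Ioi q.2) = M (Set.Ioi q.1 ×ˢ Set.Ioi q.2) :=
    (ae_restrict_iff' (measurableSet_Ici.prod measurableSet_Ici)).mp hae
  have hBnull : volume {q : ℝ × ℝ | ¬ (q ∈ Set.Ici a ×ˢ Set.Ici a →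
      γ' (Set.Ioi q.1 ×ˢ Set.Ioi q.2) = M (Set.Ioi q.1 ×ˢ Set.Ioi q.2))} = 0 := by
    rw [← ae_iff]
    exact haeR
  -- equality for all rays with corners in the support quadrant
  have hEall : ∀ s t : ℝ, a ≤ s → a ≤ t →
      γ' (Set.Ioi s ×ˢ Set.Ioi t) = M (Set.Ioi s ×ˢ Set.Ioi t) := by
    intro s t hs ht
    have hchoice : ∀ n : ℕ, ∃ q : ℝ × ℝ,
        (q.1 ∈ Set.Ioo s (s + ((n:ℝ)+1)⁻¹) ∧ q.2 ∈ Set.Ioo t (t + ((n:ℝ)+1)⁻¹)) ∧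
        γ' (Set.Ioi q.1 ×ˢ Set.Ioi q.2) = M (Set.Ioi q.1 ×ˢ Set.Ioi q.2) := by
      intro n
      by_contra hcon
      push_neg at hcon
      have hsub : Set.Ioo s (s + ((n:ℝ)+1)⁻¹) ×ˢ Set.Ioo t (t + ((n:ℝ)+1)⁻¹)
          ⊆ {q : ℝ × ℝ | ¬ (q ∈ Set.Ici a ×ˢ Set.Ici a →
            γ' (Set.Ioi q.1 ×ˢ Set.Ioi q.2) = M (Set.Ioi q.1 ×ˢ Set.Ioi q.2))} := by
        rintro ⟨x, y⟩ ⟨hx, hy⟩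
        simp only [Set.mem_setOf_eq]
        intro hcontra
        have hmem : ((x, y) : ℝ × ℝ) ∈ Set.Ici a ×ˢ Set.Ici a :=
          ⟨hs.trans hx.1.le, ht.trans hy.1.le⟩
        exact hcon (x, y) ⟨hx, hy⟩ (hcontra hmem)
      have hpos : volume (Set.Ioo s (s + ((n:ℝ)+1)⁻¹) ×ˢ Set.Ioo t (t + ((n:ℝ)+1)⁻¹)) ≠ 0 := by
        rw [Measure.volume_eq_prod, Measure.prod_prod, Real.volume_Ioo, Real.volume_Ioo]
        have h1 : (0:ℝ) < ((n:ℝ)+1)⁻¹ := by positivity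
        simp only [add_sub_cancel_left]
        exact (ENNReal.mul_pos (ENNReal.ofReal_pos.mpr h1).ne' (ENNReal.ofReal_pos.mpr h1).ne').ne'
      exact hpos (measure_mono_null hsub hBnull)
    choose q hq hqeq using hchoice
    have hlow : ∀ n : ℕ, γ' (Set.Ioi (s + ((n:ℝ)+1)⁻¹) ×ˢ Set.Ioi (t + ((n:ℝ)+1)⁻¹))
        ≤ γ' (Set.Ioi (q n).1 ×ˢ Set.Ioi (q n).2) := fun n =>
      measure_mono (Set.prod_mono (Set.Ioi_subset_Ioi (hq n).1.2.le)
        (Set.Ioi_subset_Ioi (hq n).2.2.le))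
    have hup : ∀ n : ℕ, γ' (Set.Ioi (q n).1 ×ˢ Set.Ioi (q n).2)
        ≤ γ' (Set.Ioi s ×ˢ Set.Ioi t) := fun n =>
      measure_mono (Set.prod_mono (Set.Ioi_subset_Ioi (hq n).1.1.le)
        (Set.Ioi_subset_Ioi (hq n).2.1.le))
    have hlowM : ∀ n : ℕ, M (Set.Ioi (s + ((n:ℝ)+1)⁻¹) ×ˢ Set.Ioi (t + ((n:ℝ)+1)⁻¹))
        ≤ M (Set.Ioi (q n).1 ×ˢ Set.Ioi (q n).2) := fun n =>
      measure_mono (Set.prod_mono (Set.Ioi_subset_Ioi (hq n).1.2.le)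
        (Set.Ioi_subset_Ioi (hq n).2.2.le))
    have hupM : ∀ n : ℕ, M (Set.Ioi (q n).1 ×ˢ Set.Ioi (q n).2)
        ≤ M (Set.Ioi s ×ˢ Set.Ioi t) := fun n =>
      measure_mono (Set.prod_mono (Set.Ioi_subset_Ioi (hq n).1.1.le)
        (Set.Ioi_subset_Ioi (hq n).2.1.le))
    have htend1 : Tendsto (fun n : ℕ => γ' (Set.Ioi (q n).1 ×ˢ Set.Ioi (q n).2)) atTop
        (𝓝 (γ' (Set.Ioi s ×ˢ Set.Ioi t))) :=
      tendsto_of_tendsto_of_tendsto_of_le_of_le (ray_tendsto γ' s t) tendsto_const_nhds hlow hup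
    have htend2 : Tendsto (fun n : ℕ => M (Set.Ioi (q n).1 ×ˢ Set.Ioi (q n).2)) atTop
        (𝓝 (M (Set.Ioi s ×ˢ Set.Ioi t))) :=
      tendsto_of_tendsto_of_tendsto_of_le_of_le (ray_tendsto M s t) tendsto_const_nhds hlowM hupM
    exact tendsto_nhds_unique (htend1.congr (fun n => hqeq n)) htend2
  -- extend to all rays via support reduction
  have h0a : ν₀ (Set.Iio a ∪ {a}) = 0 :=
    measure_union_null (measure_mono_null (fun x hx => by
      simp only [Set.mem_compl_iff, Set.mem_Icc, not_and_or, not_le]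
      exact Or.inl hx) hν₀supp) (atoms_of_ac hν₀ac a)
  have h1a : ν₁ (Set.Iio a ∪ {a}) = 0 :=
    measure_union_null (measure_mono_null (fun x hx => by
      simp only [Set.mem_compl_iff, Set.mem_Icc, not_and_or, not_le]
      exact Or.inl hx) hν₁supp) (atoms_of_ac hν₁ac a)
  refine ext_of_rays γ' M (fun s t => ?_)
  rw [ray_reduce a γ' h0 h1 h0a h1a s t, ray_reduce a M hM0 hM1 h0a h1a s t]
  exact hEall _ _ (le_max_right s a) (le_max_right t a)
end
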